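/- arXiv:2306.12433 — 6 statements merged into one kernel-verified Lean document; each statement's English description precedes it below -/
import Mathlib

section
/- The Fourier transform f ↦ (Π(f))_{Π∈Ĝ}, where Π(f) = Σ_{x∈G} f(x)Π(x), is an algebra isomorphism from the convolution algebra C(G) onto the direct sum ⊕_{Π∈Ĝ} End(V(Π)) over the irreducible representations of the finite group G. -/
/-- A representation is irreducible: the space is nonzero and the only invariant subspaces are
`⊥` and `⊤`. -/
def IsIrreducibleRep {G V : Type*} [Group G] [AddCommGroup V] [Module ℂ V]
    (ρ : Representation ℂ G V) : Prop :=
  Nontrivial V ∧ ∀ U : Submodule ℂ V, (∀ g : G, ∀ v ∈ U, ρ g v ∈ U) → U = ⊥ ∨ U = ⊤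

/-- Equivalence of representations: an invertible intertwining operator exists. -/
def RepEquiv {G V W : Type*} [Group G] [AddCommGroup V] [Module ℂ V]
    [AddCommGroup W] [Module ℂ W]
    (ρ : Representation ℂ G V) (π : Representation ℂ G W) : Prop :=
  ∃ e : V ≃ₗ[ℂ] W, ∀ (g : G) (v : V), e (ρ g v) = π g (e v)

set_option linter.unusedSectionVars false
set_option maxHeartbeats 1000000

namespace FourierAux

open MonoidAlgebra

variable {G : Type} [Group G] [Fintype G]

lemma asAlgebraHom_eq_sum {W : Type} [AddCommGroup W] [Module ℂ W]
    (π : Representation ℂ G W) (f : MonoidAlgebra ℂ G) :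
    π.asAlgebraHom f = ∑ x : G, f.coeff x • π x := by
  rw [Representation.asAlgebraHom_def, MonoidAlgebra.lift_apply, Finsupp.sum_fintype]
  intro a; exact zero_smul _ _

lemma csmul_asModule {W : Type} [AddCommGroup W] [Module ℂ W]
    (π : Representation ℂ G W) (c : ℂ) (x : π.asModule) :
    (algebraMap ℂ (MonoidAlgebra ℂ G) c) • x = c • x := by
  show π.asAlgebraHom (algebraMap ℂ (MonoidAlgebra ℂ G) c) x = c • x
  rw [AlgHom.commutes]; rfl

lemma of_smul_asModule {W : Type} [AddCommGroup W] [Module ℂ W]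
    (π : Representation ℂ G W) (g : G) (x : π.asModule) :
    ((MonoidAlgebra.single g 1 : MonoidAlgebra ℂ G)) • x = π g x := by
  show π.asAlgebraHom (MonoidAlgebra.single g 1) x = π g x
  rw [Representation.asAlgebraHom_single, one_smul]

lemma a_decomp (a : MonoidAlgebra ℂ G) :
    a = ∑ g : G, a.coeff g • (MonoidAlgebra.single g 1 : MonoidAlgebra ℂ G) := by
  classical
  ext x
  rw [MonoidAlgebra.coeff_sum, Finset.sum_apply']
  simp [Finsupp.single_apply, Finset.sum_ite_eq' Finset.univ x fun g => a.coeff g]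

lemma mul_decomp (a x : MonoidAlgebra ℂ G) :
    a * x = ∑ g : G, a.coeff g • ((MonoidAlgebra.single g 1 : MonoidAlgebra ℂ G) * x) := by
  conv_lhs => rw [a_decomp a]
  rw [Finset.sum_mul]
  exact Finset.sum_congr rfl fun g _ => smul_mul_assoc _ _ _

lemma isSimpleModule_asModule {W : Type} [AddCommGroup W] [Module ℂ W]
    (π : Representation ℂ G W) (h : IsIrreducibleRep π) :
    IsSimpleModule (MonoidAlgebra ℂ G) π.asModule := by
  obtain ⟨hW, hU⟩ := h
  haveI : Nontrivial π.asModule := hW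
  refine { toIsSimpleOrder := ⟨fun U => ?_⟩ }
  let U' : Submodule ℂ W :=
    { carrier := (U : Set π.asModule)
      add_mem' := fun ha hb => U.add_mem ha hb
      zero_mem' := U.zero_mem
      smul_mem' := fun c x hx => by
        have := U.smul_mem (algebraMap ℂ (MonoidAlgebra ℂ G) c) hx
        rw [csmul_asModule π c x] at this
        exact this }
  have hinv : ∀ g : G, ∀ v ∈ U', π g v ∈ U' := fun g v hv => by
    have := U.smul_mem (MonoidAlgebra.single g 1 : MonoidAlgebra ℂ G) hv
    rw [of_smul_asModule π g v] at this
    exact this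
  rcases hU U' hinv with h | h
  · left
    rw [Submodule.eq_bot_iff] at h ⊢
    exact fun x hx => h x hx
  · right
    rw [Submodule.eq_top_iff'] at h ⊢
    exact fun x => h x

lemma repEquiv_of_bijective {W₁ W₂ : Type} [AddCommGroup W₁] [Module ℂ W₁]
    [AddCommGroup W₂] [Module ℂ W₂]
    (π₁ : Representation ℂ G W₁) (π₂ : Representation ℂ G W₂)
    (ψ : π₁.asModule →ₗ[MonoidAlgebra ℂ G] π₂.asModule) (hbij : Function.Bijective ψ) :
    RepEquiv π₁ π₂ := by
  have hsmul : ∀ (c : ℂ) (x : π₁.asModule), ψ (c • x) = c • ψ x := fun c x => by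
    rw [← csmul_asModule π₁, map_smul, csmul_asModule]
  refine ⟨{ toFun := fun v => ψ v
            invFun := Function.surjInv hbij.2
            left_inv := Function.leftInverse_surjInv hbij
            right_inv := Function.rightInverse_surjInv hbij.2
            map_add' := ψ.map_add
            map_smul' := hsmul }, fun g v => ?_⟩
  show ψ (π₁ g v) = π₂ g (ψ v)
  exact (congrArg ψ (of_smul_asModule π₁ g v)).symm.trans
    ((map_smul ψ _ (show π₁.asModule from v)).trans (of_smul_asModule π₂ g (ψ v)))

lemma schur_scalar {W : Type} [AddCommGroup W] [Module ℂ W] [FiniteDimensional ℂ W]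
    (π : Representation ℂ G W) (h : IsIrreducibleRep π)
    (hsimple : IsSimpleModule (MonoidAlgebra ℂ G) π.asModule)
    (ψ : π.asModule →ₗ[MonoidAlgebra ℂ G] π.asModule) :
    ∃ c : ℂ, ∀ x : π.asModule, ψ x = c • x := by
  haveI : Nontrivial W := h.1
  have hsmul : ∀ (c : ℂ) (x : π.asModule), ψ (c • x) = c • ψ x := fun c x => by
    rw [← csmul_asModule π, map_smul, csmul_asModule]
  let ψ' : Module.End ℂ W := { toFun := fun v => ψ v, map_add' := ψ.map_add, map_smul' := hsmul }
  obtain ⟨c, hc⟩ := Module.End.exists_eigenvalue ψ'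
  obtain ⟨v, hv⟩ := hc.exists_hasEigenvector
  refine ⟨c, ?_⟩
  let χ : π.asModule →ₗ[MonoidAlgebra ℂ G] π.asModule :=
    { toFun := fun x => ψ x - c • x
      map_add' := fun x y => by
        show ψ (x + y) - c • (x + y) = (ψ x - c • x) + (ψ y - c • y)
        rw [map_add, smul_add]; abel
      map_smul' := fun a x => by
        show ψ (a • x) - c • (a • x) = a • (ψ x - c • x)
        rw [map_smul, smul_sub]
        congr 1
        show c • (π.asAlgebraHom a x) = π.asAlgebraHom a (c • x)
        exact (map_smul (π.asAlgebraHom a) c x).symm }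
  let wv : π.asModule := v
  have hχv : χ wv = 0 := by
    show ψ wv - c • wv = 0
    rw [sub_eq_zero]
    exact hv.apply_eq_smul
  have : χ = 0 := by
    rcases LinearMap.injective_or_eq_zero χ with hinj | h0
    · exact absurd (hinj (hχv.trans (map_zero χ).symm)) hv.2
    · exact h0
  intro x
  have := congrArg (fun f => f x) this
  simpa [χ, sub_eq_zero] using this

/-- Injectivity of the Fourier transform. -/
lemma fourier_injective {ι : Type} (V : ι → Type)
    [∀ i, AddCommGroup (V i)] [∀ i, Module ℂ (V i)] [∀ i, FiniteDimensional ℂ (V i)]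
    (ρ : ∀ i, Representation ℂ G (V i))
    (hcomplete : ∀ (W : Type) [AddCommGroup W] [Module ℂ W] [FiniteDimensional ℂ W]
      (π : Representation ℂ G W), IsIrreducibleRep π → ∃ i, RepEquiv π (ρ i))
    (a : MonoidAlgebra ℂ G) (ha : ∀ i, (ρ i).asAlgebraHom a = 0) : a = 0 := by
  haveI : Nonempty G := ⟨1⟩
  haveI : NeZero ((Fintype.card G : ℂ)) := ⟨Nat.cast_ne_zero.mpr (Fintype.card_ne_zero (α := G))⟩
  haveI : FiniteDimensional ℂ (MonoidAlgebra ℂ G) :=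
    Module.Finite.equiv ((Finsupp.linearEquivFunOnFinite ℂ ℂ G).symm.trans (MonoidAlgebra.coeffLinearEquiv ℂ).symm)
  -- key step : a annihilates every simple submodule of the regular module
  have key : ∀ S : Submodule (MonoidAlgebra ℂ G) (MonoidAlgebra ℂ G),
      IsSimpleModule (MonoidAlgebra ℂ G) S → ∀ s ∈ S, a * s = 0 := by
    intro S hS s hs
    set W := ↥(S.restrictScalars ℂ) with hW
    have hmemS : ∀ (w : W), (w : MonoidAlgebra ℂ G) ∈ S := fun w => w.2
    have hmul_mem : ∀ (g : G) (w : W),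
        (MonoidAlgebra.single g 1 : MonoidAlgebra ℂ G) * (w : MonoidAlgebra ℂ G) ∈
          S.restrictScalars ℂ := fun g w => S.smul_mem _ (hmemS w)
    let π : Representation ℂ G W :=
      { toFun := fun g =>
          { toFun := fun w => ⟨MonoidAlgebra.single g 1 * (w : MonoidAlgebra ℂ G), hmul_mem g w⟩
            map_add' := fun u v => Subtype.ext (by
              show MonoidAlgebra.single g 1 * ((u : MonoidAlgebra ℂ G) + (v : MonoidAlgebra ℂ G)) =
                MonoidAlgebra.single g 1 * (u : MonoidAlgebra ℂ G) +
                  MonoidAlgebra.single g 1 * (v : MonoidAlgebra ℂ G)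
              rw [mul_add])
            map_smul' := fun c u => Subtype.ext (by
              show MonoidAlgebra.single g 1 * (c • (u : MonoidAlgebra ℂ G)) =
                c • (MonoidAlgebra.single g 1 * (u : MonoidAlgebra ℂ G))
              simp [mul_smul_comm]) }
        map_one' := by
          ext w; simp [MonoidAlgebra.one_def]
        map_mul' := fun g h => by
          ext w
          simp [MonoidAlgebra.single_mul_single, mul_assoc] }
    have hπ : ∀ (g : G) (w : W),
        (π g w : MonoidAlgebra ℂ G) = MonoidAlgebra.single g 1 * (w : MonoidAlgebra ℂ G) :=
      fun g w => rfl
    haveI : Nontrivial W := IsSimpleModule.nontrivial (MonoidAlgebra ℂ G) S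
    have hIrr : IsIrreducibleRep π := by
      refine ⟨inferInstance, fun U hU => ?_⟩
      -- build the corresponding submodule of the regular module
      let U₀ : Submodule ℂ (MonoidAlgebra ℂ G) := U.map (S.restrictScalars ℂ).subtype
      let T : Submodule (MonoidAlgebra ℂ G) (MonoidAlgebra ℂ G) :=
        { carrier := U₀
          add_mem' := fun h1 h2 => U₀.add_mem h1 h2
          zero_mem' := U₀.zero_mem
          smul_mem' := by
            intro b x hx
            show b * x ∈ U₀
            rw [mul_decomp b x]
            refine Submodule.sum_mem U₀ fun g _ => Submodule.smul_mem U₀ _ ?_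
            obtain ⟨u, hu, rfl⟩ := hx
            exact ⟨π g u, hU g u hu, rfl⟩ }
      have hTS : T ≤ S := by
        intro x hx
        obtain ⟨u, _, rfl⟩ := hx
        exact hmemS u
      rcases (isSimpleModule_iff_isAtom.mp hS).le_iff.mp hTS with hbot | heq
      · left
        rw [Submodule.eq_bot_iff]
        intro u hu
        have : (u : MonoidAlgebra ℂ G) ∈ T := ⟨u, hu, rfl⟩
        rw [hbot] at this
        exact Subtype.ext (by simpa using this)
      · right
        rw [Submodule.eq_top_iff']
        intro w
        have : (w : MonoidAlgebra ℂ G) ∈ T := by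
          rw [heq]; exact hmemS w
        obtain ⟨u, hu, huw⟩ := this
        have : u = w := Subtype.ext huw
        rwa [← this]
    obtain ⟨i, e, he⟩ := hcomplete W π hIrr
    -- now compute
    set w : W := ⟨s, hs⟩ with hwdef
    set w' : W := ∑ g : G, a.coeff g • π g w with hw'def
    have hsum : (w' : MonoidAlgebra ℂ G) = a * s := by
      calc (w' : MonoidAlgebra ℂ G)
          = (S.restrictScalars ℂ).subtype (∑ g : G, a.coeff g • π g w) := rfl
        _ = ∑ g : G, a.coeff g • (MonoidAlgebra.single g 1 * s) := by
            rw [map_sum]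
            exact Finset.sum_congr rfl fun g _ => by rw [map_smul]; rfl
        _ = a * s := (mul_decomp a s).symm
    have hez : e w' = 0 := by
      rw [hw'def, map_sum]
      have hterm : ∀ g : G, e (a.coeff g • π g w) = a.coeff g • (ρ i) g (e w) := fun g => by
        rw [map_smul, he]
      rw [Finset.sum_congr rfl fun g _ => hterm g]
      have h0 : (ρ i).asAlgebraHom a (e w) = 0 := by rw [ha i]; rfl
      rw [asAlgebraHom_eq_sum] at h0
      simpa using h0
    have hz : w' = 0 := e.injective (by rw [hez, map_zero])
    rw [← hsum, hz, Submodule.coe_zero]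
  -- conclude using semisimplicity
  have htop : (⊤ : Submodule (MonoidAlgebra ℂ G) (MonoidAlgebra ℂ G)) =
      sSup {S : Submodule (MonoidAlgebra ℂ G) (MonoidAlgebra ℂ G) | IsSimpleModule (MonoidAlgebra ℂ G) S} :=
    (IsSemisimpleModule.sSup_simples_eq_top _ _).symm
  have h1 : (1 : MonoidAlgebra ℂ G) ∈
      sSup {S : Submodule (MonoidAlgebra ℂ G) (MonoidAlgebra ℂ G) | IsSimpleModule (MonoidAlgebra ℂ G) S} := by
    rw [← htop]; trivial
  rw [sSup_eq_iSup'] at h1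
  have hmul : a * 1 = 0 := Submodule.iSup_induction (motive := fun x => a * x = 0)
    (fun S : {S : Submodule (MonoidAlgebra ℂ G) (MonoidAlgebra ℂ G) // IsSimpleModule (MonoidAlgebra ℂ G) S} =>
      (S : Submodule (MonoidAlgebra ℂ G) (MonoidAlgebra ℂ G))) h1
    (fun S x hx => key S.1 S.2 x hx) (mul_zero a)
    (fun x y hx hy => by
      show a * (x + y) = 0
      rw [mul_add, (hx : a * x = 0), (hy : a * y = 0), add_zero])
  rwa [mul_one] at hmul

end FourierAux

open FourierAux

/-- The Fourier transform `f ↦ (Π(f))_{Π ∈ Ĝ}`, `Π(f) = ∑_x f(x) Π(x)`, is an algebra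
isomorphism from the convolution algebra `C(G)` onto `⊕_{Π ∈ Ĝ} End(V(Π))`, where
`(ρ i)_{i ∈ ι}` is a complete set of representatives of the irreducible complex
representations of the finite group `G`. -/
theorem fourier_transform_alg_iso (G : Type) [Group G] [Fintype G]
    (ι : Type) [Fintype ι] (V : ι → Type)
    [∀ i, AddCommGroup (V i)] [∀ i, Module ℂ (V i)] [∀ i, FiniteDimensional ℂ (V i)]
    (ρ : ∀ i, Representation ℂ G (V i))
    (hirr : ∀ i, IsIrreducibleRep (ρ i))
    (hdist : ∀ i j, i ≠ j → ¬ RepEquiv (ρ i) (ρ j))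
    (hcomplete : ∀ (W : Type) [AddCommGroup W] [Module ℂ W] [FiniteDimensional ℂ W]
      (π : Representation ℂ G W), IsIrreducibleRep π → ∃ i, RepEquiv π (ρ i)) :
    ∃ e : MonoidAlgebra ℂ G ≃ₐ[ℂ] (∀ i, Module.End ℂ (V i)),
      ∀ (f : MonoidAlgebra ℂ G) (i : ι), e f i = ∑ x : G, f.coeff x • ρ i x := by
  classical
  haveI : Nonempty G := ⟨1⟩
  haveI : NeZero ((Fintype.card G : ℂ)) := ⟨Nat.cast_ne_zero.mpr (Fintype.card_ne_zero (α := G))⟩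
  let Φ : MonoidAlgebra ℂ G →ₐ[ℂ] ∀ i, Module.End ℂ (V i) :=
    Pi.algHom ℂ (fun i => Module.End ℂ (V i)) fun i => (ρ i).asAlgebraHom
  have hΦ : ∀ (f : MonoidAlgebra ℂ G) (i : ι), Φ f i = (ρ i).asAlgebraHom f := fun f i => rfl
  -- the product representation
  let ρPi : Representation ℂ G (∀ i, V i) :=
    { toFun := fun g => LinearMap.pi fun i => (ρ i g).comp (LinearMap.proj i)
      map_one' := by
        apply LinearMap.ext; intro m; funext i
        simp
      map_mul' := fun g h => by
        apply LinearMap.ext; intro m; funext i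
        simp }
  let M := ρPi.asModule
  have compo : ∀ (a : MonoidAlgebra ℂ G) (m : M) (i : ι),
      (a • m : M) i = (ρ i).asAlgebraHom a (m i) := by
    intro a m i
    show (ρPi.asAlgebraHom a) m i = _
    rw [asAlgebraHom_eq_sum, asAlgebraHom_eq_sum]
    simp only [LinearMap.sum_apply, Finset.sum_apply, LinearMap.smul_apply, Pi.smul_apply,
      LinearMap.pi_apply, LinearMap.comp_apply, LinearMap.proj_apply]
    erw [LinearMap.sum_apply, Finset.sum_apply]
    rfl
  haveI hsimp : ∀ i, IsSimpleModule (MonoidAlgebra ℂ G) (ρ i).asModule :=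
    fun i => isSimpleModule_asModule _ (hirr i)
  let projA : ∀ i, M →ₗ[MonoidAlgebra ℂ G] (ρ i).asModule := fun i =>
    { toFun := fun m => m i
      map_add' := fun _ _ => rfl
      map_smul' := fun a m => compo a m i }
  let inclA : ∀ i, (ρ i).asModule →ₗ[MonoidAlgebra ℂ G] M := fun i =>
    { toFun := fun v => Pi.single i v
      map_add' := fun u v => Pi.single_add i u v
      map_smul' := fun a v => by
        funext j
        erw [compo]
        rcases eq_or_ne j i with h | h
        · subst h
          change (Pi.single j ((ρ j).asAlgebraHom a v) : ∀ k, V k) j = _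
          rw [Pi.single_eq_same]
          erw [Pi.single_eq_same]
          rfl
        · change (Pi.single i ((ρ i).asAlgebraHom a v) : ∀ k, V k) j = _
          simp only [Pi.single_eq_of_ne h, map_zero]
          erw [Pi.single_eq_of_ne h, map_zero] }
  -- every `MonoidAlgebra`-endomorphism of M is componentwise scalar
  have endo : ∀ (φ : M →ₗ[MonoidAlgebra ℂ G] M), ∃ c : ι → ℂ,
      ∀ (m : M) (i : ι), φ m i = c i • m i := by
    intro φ
    have hcc : ∀ i, ∃ c : ℂ, ∀ v : (ρ i).asModule,
        ((projA i) ∘ₗ φ ∘ₗ (inclA i)) v = c • v := fun i =>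
      schur_scalar (ρ i) (hirr i) (hsimp i) _
    choose c hc using hcc
    have hzero : ∀ i j, i ≠ j → ∀ v : (ρ i).asModule,
        ((projA j) ∘ₗ φ ∘ₗ (inclA i)) v = 0 := by
      intro i j hne v
      by_contra hv
      have hψ : ((projA j) ∘ₗ φ ∘ₗ (inclA i)) ≠ 0 := fun h => hv (by rw [h]; rfl)
      haveI := hsimp i; haveI := hsimp j
      have hbij := LinearMap.bijective_of_ne_zero hψ
      exact hdist i j hne (repEquiv_of_bijective (ρ i) (ρ j) _ hbij)
    refine ⟨c, fun m i => ?_⟩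
    have hm : m = ∑ j, (inclA j) (m j) := by
      show m = ∑ j, Pi.single j (m j)
      exact (Finset.univ_sum_single m).symm
    calc φ m i = (∑ j, φ ((inclA j) (m j))) i := by rw [← map_sum, ← hm]
      _ = ∑ j, (φ ((inclA j) (m j))) i := Finset.sum_apply i Finset.univ _
      _ = (show V i from ∑ j, ((projA i) ∘ₗ φ ∘ₗ (inclA j)) (m j)) := rfl
      _ = (show V i from ((projA i) ∘ₗ φ ∘ₗ (inclA i)) (m i)) := by
          refine Finset.sum_eq_single i (fun j _ hji => hzero j i hji (m j)) (fun h => absurd (Finset.mem_univ i) h)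
      _ = c i • m i := hc i (m i)
  -- density argument: surjectivity
  haveI : FiniteDimensional ℂ M := inferInstanceAs (FiniteDimensional ℂ (∀ i, V i))
  let b := Module.finBasis ℂ M
  let μ : MonoidAlgebra ℂ G →ₗ[MonoidAlgebra ℂ G] (Fin (Module.finrank ℂ M) → M) :=
    { toFun := fun a j => a • b j
      map_add' := fun a a' => funext fun j => add_smul a a' (b j)
      map_smul' := fun r a => funext fun j => mul_smul r a (b j) }
  let N := LinearMap.range μ
  obtain ⟨q, hq⟩ := ComplementedLattice.exists_isCompl N
  let pr := N.linearProjOfIsCompl q hq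
  let p : (Fin (Module.finrank ℂ M) → M) →ₗ[MonoidAlgebra ℂ G] (Fin (Module.finrank ℂ M) → M) :=
    N.subtype ∘ₗ pr
  have hpmem : ∀ x, p x ∈ N := fun x => (pr x).2
  have hpid : ∀ x, x ∈ N → p x = x := by
    intro x hx
    show ((pr x : N) : _) = x
    rw [show pr x = ⟨x, hx⟩ from Submodule.linearProjOfIsCompl_apply_left hq ⟨x, hx⟩]
  let pent : Fin (Module.finrank ℂ M) → Fin (Module.finrank ℂ M) →
      (M →ₗ[MonoidAlgebra ℂ G] M) := fun r s =>
    (LinearMap.proj r) ∘ₗ p ∘ₗ (LinearMap.single (MonoidAlgebra ℂ G) (fun _ => M) s)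
  have hpdecomp : ∀ (y : Fin (Module.finrank ℂ M) → M) r, p y r = ∑ s, pent r s (y s) := by
    intro y r
    conv_lhs => rw [show y = ∑ s, Pi.single s (y s) from (Finset.univ_sum_single y).symm]
    rw [map_sum]
    rw [Finset.sum_apply r Finset.univ _]
    exact Finset.sum_congr rfl fun s _ => rfl
  have hsurj : Function.Surjective Φ := by
    intro T
    let Tlin : M →ₗ[ℂ] M := LinearMap.pi fun i => (T i).comp (LinearMap.proj i)
    have hTlin : ∀ (m : M) (i : ι), Tlin m i = T i (m i) := fun m i => rfl
    have hTcomm : ∀ (φ : M →ₗ[MonoidAlgebra ℂ G] M) (m : M), φ (Tlin m) = Tlin (φ m) := by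
      intro φ m
      obtain ⟨c, hcφ⟩ := endo φ
      funext i
      rw [hcφ, hTlin, hTlin, hcφ, map_smul]
    let Tk : (Fin (Module.finrank ℂ M) → M) → (Fin (Module.finrank ℂ M) → M) :=
      fun y j => Tlin (y j)
    have hTk : ∀ y, p (Tk y) = Tk (p y) := by
      intro y; funext r
      rw [hpdecomp]
      calc ∑ s, pent r s (Tk y s) = ∑ s, Tlin (pent r s (y s)) :=
            Finset.sum_congr rfl fun s _ => hTcomm (pent r s) (y s)
        _ = Tlin (∑ s, pent r s (y s)) := (map_sum Tlin _ _).symm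
        _ = Tlin (p y r) := by rw [← hpdecomp]
        _ = Tk (p y) r := rfl
    have hbN : (fun j => b j : Fin (Module.finrank ℂ M) → M) ∈ N :=
      ⟨1, funext fun j => one_smul _ _⟩
    have hTbN : Tk (fun j => b j) ∈ N := by
      have h1 := hTk (fun j => b j)
      rw [hpid _ hbN] at h1
      rw [← h1]; exact hpmem _
    obtain ⟨a, haT⟩ := hTbN
    refine ⟨a, ?_⟩
    -- the ℂ-linear map `a • ·` agrees with Tlin on the basis, hence everywhere
    let aL : M →ₗ[ℂ] M :=
      { toFun := fun m => a • m
        map_add' := fun x y => smul_add a x y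
        map_smul' := fun cc m => map_smul (ρPi.asAlgebraHom a) cc m }
    have haL : aL = Tlin := b.ext fun j => congrFun haT j
    funext i
    apply LinearMap.ext; intro v
    let m0 : M := Pi.single i v
    have h2 : a • m0 = Tlin m0 :=
      congrArg (fun (f : M →ₗ[ℂ] M) => f m0) haL
    have h3 := congrFun h2 i
    rw [compo] at h3
    have h4 : m0 i = v := Pi.single_eq_same i v
    rw [hΦ, ← h4]
    exact h3
  have hinj : Function.Injective Φ := by
    intro x y hxy
    have hz : ∀ i, (ρ i).asAlgebraHom (x - y) = 0 := by
      intro i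
      rw [map_sub, sub_eq_zero, ← hΦ, ← hΦ, hxy]
    exact sub_eq_zero.mp (fourier_injective V ρ hcomplete (x - y) hz)
  exact ⟨AlgEquiv.ofBijective Φ ⟨hinj, hsurj⟩, fun f i => asAlgebraHom_eq_sum (ρ i) f⟩
end

section
/- Fourier inversion for finite groups: for every f : G → ℂ and every x ∈ G, f(x) = (1/|G|) Σ_{Π∈Ĝ} d_Π · tr(Π(x⁻¹) · Π(f)), where Π(f) = Σ_{y∈G} f(y)Π(y). -/
open LinearMap Module Representation
open scoped Classical


section Schur

variable {G : Type} [Group G]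
variable {V W : Type*} [AddCommGroup V] [Module ℂ V] [AddCommGroup W] [Module ℂ W]

/-- Schur's lemma, part 1. -/
lemma schur1 (ρ : Representation ℂ G V) (π : Representation ℂ G W)
    (hρ : Nontrivial V ∧ ∀ U : Submodule ℂ V, (∀ g : G, ∀ v ∈ U, ρ g v ∈ U) → U = ⊥ ∨ U = ⊤)
    (hπ : Nontrivial W ∧ ∀ U : Submodule ℂ W, (∀ g : G, ∀ v ∈ U, π g v ∈ U) → U = ⊥ ∨ U = ⊤)
    (T : V →ₗ[ℂ] W) (hT : ∀ (g : G) (v : V), T (ρ g v) = π g (T v)) (hT0 : T ≠ 0) :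
    ∃ e : V ≃ₗ[ℂ] W, ∀ (g : G) (v : V), e (ρ g v) = π g (e v) := by
  have hker : ker T = ⊥ := by
    rcases hρ.2 (ker T) (fun g v hv => by
      simp only [mem_ker] at hv ⊢
      rw [hT, hv, map_zero]) with h | h
    · exact h
    · exact absurd (ker_eq_top.mp h) hT0
  have hrange : range T = ⊤ := by
    rcases hπ.2 (range T) (fun g w hw => by
      obtain ⟨v, rfl⟩ := hw
      exact ⟨ρ g v, (hT g v)⟩) with h | h
    · exact absurd (range_eq_bot.mp h) hT0
    · exact h
  exact ⟨LinearEquiv.ofBijective T ⟨ker_eq_bot.mp hker, range_eq_top.mp hrange⟩, hT⟩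

/-- Schur's lemma, part 2. -/
lemma schur2 [FiniteDimensional ℂ V] (ρ : Representation ℂ G V)
    (hρ : Nontrivial V ∧ ∀ U : Submodule ℂ V, (∀ g : G, ∀ v ∈ U, ρ g v ∈ U) → U = ⊥ ∨ U = ⊤)
    (T : V →ₗ[ℂ] V) (hT : ∀ (g : G) (v : V), T (ρ g v) = ρ g (T v)) :
    ∃ c : ℂ, T = c • LinearMap.id := by
  haveI := hρ.1
  obtain ⟨c, hc⟩ := Module.End.exists_eigenvalue (T : Module.End ℂ V)
  obtain ⟨v, hv⟩ := hc.exists_hasEigenvector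
  refine ⟨c, ?_⟩
  have hker : ker (T - c • LinearMap.id) = ⊤ := by
    rcases hρ.2 (ker (T - c • LinearMap.id)) (fun g w hw => by
      simp only [mem_ker, LinearMap.sub_apply, LinearMap.smul_apply, id_apply] at hw ⊢
      rw [hT, ← map_smul, ← map_sub, hw, map_zero]) with h | h
    · exfalso
      have : v ∈ ker (T - c • LinearMap.id) := by
        simp only [mem_ker, LinearMap.sub_apply, LinearMap.smul_apply, id_apply]
        rw [hv.apply_eq_smul, sub_self]
      rw [h, Submodule.mem_bot] at this
      exact hv.2 this
    · exact h
  have := ker_eq_top.mp hker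
  exact sub_eq_zero.mp this

end Schur

section Ortho

variable {G : Type} [Group G] [Fintype G]
variable {V W : Type*} [AddCommGroup V] [Module ℂ V] [AddCommGroup W] [Module ℂ W]
variable [FiniteDimensional ℂ V] [FiniteDimensional ℂ W]

lemma trace_linHom_apply (π : Representation ℂ G W) (ρ : Representation ℂ G V) (g : G) :
    trace ℂ (W →ₗ[ℂ] V) ((linHom π ρ) g) = trace ℂ W (π g⁻¹) * trace ℂ V (ρ g) := by
  have hrw : (linHom π ρ) g
      = (dualTensorHomEquiv ℂ W V).conj (TensorProduct.map (π.dual g) (ρ g)) := by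
    apply LinearMap.ext; intro T
    obtain ⟨t, rfl⟩ := (dualTensorHomEquiv ℂ W V).surjective T
    rw [LinearEquiv.conj_apply]
    simp only [LinearMap.coe_comp, LinearEquiv.coe_coe, Function.comp_apply,
      LinearEquiv.symm_apply_apply]
    exact (LinearMap.congr_fun (dualTensorHom_comm π ρ g) t).symm
  rw [hrw, trace_conj', trace_tensorProduct', dual_apply, trace_transpose']

lemma sum_char_mul (π : Representation ℂ G W) (ρ : Representation ℂ G V) :
    ∑ g : G, trace ℂ W (π g⁻¹) * trace ℂ V (ρ g)
      = (Fintype.card G : ℂ) * (finrank ℂ ((linHom π ρ).invariants) : ℂ) := by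
  haveI : Invertible (Fintype.card G : ℂ) :=
    invertibleOfNonzero (Nat.cast_ne_zero.mpr Fintype.card_ne_zero)
  have h2 : ⅟(Fintype.card G : ℂ) • ∑ g : G, trace ℂ (W →ₗ[ℂ] V) ((linHom π ρ) g)
      = (finrank ℂ ((linHom π ρ).invariants) : ℂ) := by
    rw [← (isProj_averageMap (linHom π ρ)).trace]
    simp [GroupAlgebra.average, _root_.map_sum]
  have h3 : ∑ g : G, trace ℂ W (π g⁻¹) * trace ℂ V (ρ g)
      = ∑ g : G, trace ℂ (W →ₗ[ℂ] V) ((linHom π ρ) g) := by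
    exact Finset.sum_congr rfl fun g _ => (trace_linHom_apply π ρ g).symm
  rw [h3, ← h2, smul_eq_mul, ← mul_assoc, mul_invOf_self, one_mul]

lemma equivariant_of_invariant {π : Representation ℂ G W} {ρ : Representation ℂ G V}
    {f : W →ₗ[ℂ] V} (hf : f ∈ (linHom π ρ).invariants) :
    ∀ (g : G) (w : W), f (π g w) = ρ g (f w) := by
  intro g w
  have h := hf g
  rw [linHom_apply] at h
  have h2 := LinearMap.congr_fun h (π g w)
  simp only [LinearMap.coe_comp, Function.comp_apply] at h2
  have h3 : (π g⁻¹) ((π g) w) = w := by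
    rw [← Module.End.mul_apply, ← map_mul, inv_mul_cancel, map_one, Module.End.one_apply]
  rw [h3] at h2
  exact h2.symm

lemma invariants_linHom_eq_bot {π : Representation ℂ G W} {ρ : Representation ℂ G V}
    (hπ : IsIrreducibleRep π) (hρ : IsIrreducibleRep ρ)
    (h : ¬ RepEquiv π ρ) : (linHom π ρ).invariants = ⊥ := by
  rw [eq_bot_iff]
  intro f hf
  rw [Submodule.mem_bot]
  by_contra hf0
  exact h (schur1 π ρ hπ hρ f (equivariant_of_invariant hf) hf0)

lemma finrank_invariants_linHom_self {ρ : Representation ℂ G V}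
    (hρ : IsIrreducibleRep ρ) : finrank ℂ ((linHom ρ ρ).invariants) = 1 := by
  haveI := hρ.1
  have hspan : (linHom ρ ρ).invariants = Submodule.span ℂ {(LinearMap.id : V →ₗ[ℂ] V)} := by
    apply le_antisymm
    · intro f hf
      obtain ⟨c, rfl⟩ := schur2 ρ hρ f (equivariant_of_invariant hf)
      exact Submodule.smul_mem _ c (Submodule.mem_span_singleton_self _)
    · rw [Submodule.span_le, Set.singleton_subset_iff]
      intro g
      rw [linHom_apply, LinearMap.id_comp, ← Module.End.mul_eq_comp, ← map_mul, mul_inv_cancel, map_one]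
      rfl
  rw [hspan]
  apply finrank_span_singleton
  intro h
  obtain ⟨x, hx⟩ := exists_ne (0 : V)
  exact hx (by simpa using LinearMap.congr_fun h x)

end Ortho

section Decomp

variable {G : Type} [Group G] [Fintype G]
variable {W : Type*} [AddCommGroup W] [Module ℂ W]

/-- Restriction of a representation to an invariant submodule. -/
def subRep (π : Representation ℂ G W) (S : Submodule ℂ W)
    (hS : ∀ g : G, ∀ v ∈ S, π g v ∈ S) : Representation ℂ G S where
  toFun g := (π g).restrict (hS g)
  map_one' := by
    ext v
    simp [LinearMap.restrict_apply]
  map_mul' g h := by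
    ext v
    simp [LinearMap.restrict_apply]

@[simp] lemma subRep_apply (π : Representation ℂ G W) (S : Submodule ℂ W)
    (hS : ∀ g : G, ∀ v ∈ S, π g v ∈ S) (g : G) (v : S) :
    (subRep π S hS g v : W) = π g (v : W) := rfl

lemma trace_eq_add_of_isCompl [FiniteDimensional ℂ W] (π : Representation ℂ G W)
    (S Q : Submodule ℂ W)
    (hS : ∀ g : G, ∀ v ∈ S, π g v ∈ S) (hQ : ∀ g : G, ∀ v ∈ Q, π g v ∈ Q)
    (hc : IsCompl S Q) (g : G) :
    trace ℂ W (π g) = trace ℂ S (subRep π S hS g) + trace ℂ Q (subRep π Q hQ g) := by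
  set e := Submodule.prodEquivOfIsCompl S Q hc with he
  have key : ∀ p : S × Q,
      π g (e p) = e ((LinearMap.prodMap (subRep π S hS g) (subRep π Q hQ g)) p) := by
    rintro ⟨s, q⟩
    simp only [he, Submodule.coe_prodEquivOfIsCompl', LinearMap.prodMap_apply, map_add,
      subRep_apply]
  have hrw : π g = e.conj (LinearMap.prodMap (subRep π S hS g) (subRep π Q hQ g)) := by
    apply LinearMap.ext; intro w
    conv_lhs => rw [← e.apply_symm_apply w]
    rw [key, LinearEquiv.conj_apply]
    simp
  rw [hrw, trace_conj', trace_prodMap']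

end Decomp

section Decomp2

variable {G : Type} [Group G] [Fintype G]
variable {W : Type*} [AddCommGroup W] [Module ℂ W]

lemma exists_irreducible_subrep [FiniteDimensional ℂ W] [Nontrivial W]
    (π : Representation ℂ G W) :
    ∃ (S : Submodule ℂ W) (hS : ∀ g : G, ∀ v ∈ S, π g v ∈ S),
      IsIrreducibleRep (subRep π S hS) := by
  classical
  set P : ℕ → Prop := fun n => ∃ S : Submodule ℂ W,
    (S ≠ ⊥ ∧ ∀ g : G, ∀ v ∈ S, π g v ∈ S) ∧ finrank ℂ S = n with hP
  have hex : ∃ n, P n :=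
    ⟨finrank ℂ (⊤ : Submodule ℂ W), ⊤, ⟨bot_lt_top.ne', fun _ _ _ => trivial⟩, rfl⟩
  obtain ⟨S, ⟨hSbot, hS⟩, hSrank⟩ := Nat.find_spec hex
  refine ⟨S, hS, ?_, ?_⟩
  · exact (Submodule.nontrivial_iff_ne_bot).mpr hSbot
  · intro U hU
    by_cases hUbot : U = ⊥
    · exact Or.inl hUbot
    right
    set M : Submodule ℂ W := U.map S.subtype with hM
    have hMinv : ∀ g : G, ∀ v ∈ M, π g v ∈ M := by
      intro g v hv
      obtain ⟨u, hu, rfl⟩ := hv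
      exact ⟨subRep π S hS g u, hU g u hu, rfl⟩
    have hMbot : M ≠ ⊥ := by
      intro h
      apply hUbot
      rw [eq_bot_iff]
      intro u hu
      have hmem : (u : W) ∈ M := ⟨u, hu, rfl⟩
      rw [h, Submodule.mem_bot] at hmem
      simpa using hmem
    have hmin : Nat.find hex ≤ finrank ℂ M := Nat.find_min' hex ⟨M, ⟨hMbot, hMinv⟩, rfl⟩
    have hMrank : finrank ℂ M = finrank ℂ U := by
      rw [hM]
      exact (Submodule.equivMapOfInjective S.subtype S.injective_subtype U).symm.finrank_eq
    have hle : finrank ℂ S ≤ finrank ℂ U := by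
      rw [← hMrank]
      omega
    exact Submodule.eq_top_of_finrank_eq (le_antisymm (Submodule.finrank_le U) hle)

lemma exists_invariant_compl [FiniteDimensional ℂ W]
    (π : Representation ℂ G W) (S : Submodule ℂ W) (hS : ∀ g : G, ∀ v ∈ S, π g v ∈ S) :
    ∃ Q : Submodule ℂ W, (∀ g : G, ∀ v ∈ Q, π g v ∈ Q) ∧ IsCompl S Q := by
  classical
  obtain ⟨T, hT⟩ := Submodule.exists_isCompl S
  set p : W →ₗ[ℂ] W := S.subtype ∘ₗ (S.linearProjOfIsCompl T hT) with hp
  have hpS : ∀ w : W, p w ∈ S := fun w => (S.linearProjOfIsCompl T hT w).2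
  have hpid : ∀ w ∈ S, p w = w := by
    intro w hw
    simp only [hp, LinearMap.coe_comp, Function.comp_apply, Submodule.coe_subtype]
    exact congrArg Subtype.val (Submodule.linearProjOfIsCompl_apply_left hT ⟨w, hw⟩)
  set q : W →ₗ[ℂ] W := (Fintype.card G : ℂ)⁻¹ • ∑ g : G, (π g) ∘ₗ p ∘ₗ (π g⁻¹) with hq
  have hcard : (Fintype.card G : ℂ) ≠ 0 := Nat.cast_ne_zero.mpr Fintype.card_ne_zero
  have hqapp : ∀ w : W, q w = (Fintype.card G : ℂ)⁻¹ • ∑ g : G, π g (p (π g⁻¹ w)) := by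
    intro w
    simp [hq, LinearMap.sum_apply]
  have hqS : ∀ w : W, q w ∈ S := by
    intro w
    rw [hqapp]
    exact Submodule.smul_mem _ _ (Submodule.sum_mem _ fun g _ => hS g _ (hpS _))
  have hqid : ∀ w ∈ S, q w = w := by
    intro w hw
    rw [hqapp]
    have : ∀ g : G, π g (p (π g⁻¹ w)) = w := by
      intro g
      rw [hpid _ (hS g⁻¹ w hw), ← Module.End.mul_apply, ← map_mul, mul_inv_cancel, map_one,
        Module.End.one_apply]
    simp only [this, Finset.sum_const, Finset.card_univ, smul_smul, ← Nat.cast_smul_eq_nsmul (R := ℂ)]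
    rw [inv_mul_cancel₀ hcard, one_smul]
  have hqequi : ∀ (h : G) (w : W), q (π h w) = π h (q w) := by
    intro h w
    rw [hqapp, hqapp, map_smul, map_sum]
    congr 1
    rw [← Fintype.sum_bijective (fun g => h * g) (Group.mulLeft_bijective h) _ _ (fun g => rfl)]
    apply Finset.sum_congr rfl
    intro g _
    have h1 : π (h * g)⁻¹ (π h w) = π g⁻¹ w := by
      rw [← Module.End.mul_apply, ← map_mul, mul_inv_rev, mul_assoc, inv_mul_cancel, mul_one]
    rw [h1, map_mul]
    rfl
  refine ⟨LinearMap.ker q, ?_, ?_⟩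
  · intro g v hv
    rw [LinearMap.mem_ker] at hv ⊢
    rw [hqequi, hv, map_zero]
  · constructor
    · rw [disjoint_iff]
      rw [eq_bot_iff]
      rintro x ⟨hx1, hx2⟩
      rw [Submodule.mem_bot]
      have := hqid x hx1
      rw [LinearMap.mem_ker.mp hx2] at this
      exact this.symm
    · rw [codisjoint_iff, eq_top_iff]
      intro w _
      have h1 : q w ∈ S := hqS w
      have h2 : w - q w ∈ LinearMap.ker q := by
        rw [LinearMap.mem_ker, map_sub, hqid _ h1, sub_self]
      have : w = q w + (w - q w) := by abel
      rw [this]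
      exact Submodule.add_mem_sup h1 h2

end Decomp2

section Main

variable {G : Type} [Group G] [Fintype G]

lemma trace_eq_of_repEquiv {V₁ V₂ : Type*} [AddCommGroup V₁] [Module ℂ V₁]
    [AddCommGroup V₂] [Module ℂ V₂] {σ : Representation ℂ G V₁} {τ : Representation ℂ G V₂}
    (h : RepEquiv σ τ) (g : G) : trace ℂ V₁ (σ g) = trace ℂ V₂ (τ g) := by
  obtain ⟨e, he⟩ := h
  have : τ g = e.conj (σ g) := by
    apply LinearMap.ext; intro w
    rw [LinearEquiv.conj_apply]
    simp only [LinearMap.coe_comp, LinearEquiv.coe_coe, Function.comp_apply]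
    rw [he, e.apply_symm_apply]
  rw [this, trace_conj']

variable {ι : Type} [Fintype ι] {V : ι → Type}
  [∀ i, AddCommGroup (V i)] [∀ i, Module ℂ (V i)] [∀ i, FiniteDimensional ℂ (V i)]
  (ρ : ∀ i, Representation ℂ G (V i))

lemma char_decomp
    (hcomplete : ∀ (W : Type) [AddCommGroup W] [Module ℂ W] [FiniteDimensional ℂ W]
      (π : Representation ℂ G W), IsIrreducibleRep π → ∃ i, RepEquiv π (ρ i)) :
    ∀ (n : ℕ) (W : Type) [AddCommGroup W] [Module ℂ W] [FiniteDimensional ℂ W]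
      (π : Representation ℂ G W), finrank ℂ W ≤ n →
      ∃ m : ι → ℕ, ∀ g : G, trace ℂ W (π g) = ∑ i, (m i : ℂ) * trace ℂ (V i) (ρ i g) := by
  intro n
  induction n with
  | zero =>
    intro W _ _ _ π hn
    haveI : Subsingleton W := finrank_zero_iff.mp (Nat.le_zero.mp hn)
    refine ⟨0, fun g => ?_⟩
    have : π g = 0 := Subsingleton.elim _ _
    simp [this]
  | succ n ih =>
    intro W _ _ _ π hn
    by_cases hW : Subsingleton W
    · refine ⟨0, fun g => ?_⟩
      have : π g = 0 := Subsingleton.elim _ _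
      simp [this]
    haveI : Nontrivial W := not_subsingleton_iff_nontrivial.mp hW
    obtain ⟨S, hS, hirrS⟩ := exists_irreducible_subrep π
    obtain ⟨Q, hQ, hcompl⟩ := exists_invariant_compl π S hS
    classical
    have hSbot : S ≠ ⊥ := Submodule.nontrivial_iff_ne_bot.mp hirrS.1
    have hSpos : 0 < finrank ℂ S := by
      rcases Nat.eq_zero_or_pos (finrank ℂ S) with h | h
      · exact absurd (Submodule.finrank_eq_zero.mp h) hSbot
      · exact h
    have hsum : finrank ℂ S + finrank ℂ Q = finrank ℂ W :=
      Submodule.finrank_add_eq_of_isCompl hcompl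
    have hQle : finrank ℂ Q ≤ n := by omega
    obtain ⟨m', hm'⟩ := ih Q (subRep π Q hQ) hQle
    obtain ⟨i₀, hi₀⟩ := hcomplete S (subRep π S hS) hirrS
    refine ⟨fun i => (if i = i₀ then 1 else 0) + m' i, fun g => ?_⟩
    rw [trace_eq_add_of_isCompl π S Q hS hQ hcompl g, trace_eq_of_repEquiv hi₀ g, hm' g]
    push_cast
    rw [Finset.sum_congr rfl (fun i _ => add_mul ((if i = i₀ then (1:ℂ) else 0)) (m' i : ℂ) _),
      Finset.sum_add_distrib]
    congr 1
    rw [Finset.sum_congr rfl (fun i _ => by rw [ite_mul, one_mul, zero_mul]),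
      Finset.sum_ite_eq' Finset.univ i₀ (fun i => trace ℂ (V i) (ρ i g))]
    simp

end Main

section Reg

variable (G : Type) [Group G] [Fintype G]

/-- The left regular representation on `G → ℂ`. -/
def regRep : Representation ℂ G (G → ℂ) where
  toFun g :=
    { toFun := fun f x => f (g⁻¹ * x)
      map_add' := fun f₁ f₂ => rfl
      map_smul' := fun c f => rfl }
  map_one' := by
    ext f x
    simp
  map_mul' g h := by
    ext f x
    simp [mul_assoc]

lemma trace_regRep (g : G) :
    trace ℂ (G → ℂ) (regRep G g) = if g = 1 then (Fintype.card G : ℂ) else 0 := by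
  classical
  rw [trace_eq_matrix_trace ℂ (Pi.basisFun ℂ G), Matrix.trace]
  have hdiag : ∀ x : G,
      (LinearMap.toMatrix (Pi.basisFun ℂ G) (Pi.basisFun ℂ G) (regRep G g)).diag x
        = if g = 1 then 1 else 0 := by
    intro x
    rw [Matrix.diag_apply, LinearMap.toMatrix_apply, Pi.basisFun_repr]
    have : ((regRep G g) (Pi.basisFun ℂ G x)) x = (Pi.basisFun ℂ G x) (g⁻¹ * x) := rfl
    rw [this, Pi.basisFun_apply]
    simp only [Pi.single_apply]
    congr 1
    rw [eq_iff_iff]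
    rw [mul_eq_right, inv_eq_one]
  rw [Finset.sum_congr rfl (fun x _ => hdiag x)]
  simp only [Finset.sum_const, Finset.card_univ, nsmul_eq_mul, mul_ite, mul_one, mul_zero]

end Reg

section Final

variable {G : Type} [Group G] [Fintype G]
variable {ι : Type} [Fintype ι] {V : ι → Type}
  [∀ i, AddCommGroup (V i)] [∀ i, Module ℂ (V i)] [∀ i, FiniteDimensional ℂ (V i)]
  (ρ : ∀ i, Representation ℂ G (V i))

lemma ortho (hirr : ∀ i, IsIrreducibleRep (ρ i))
    (hdist : ∀ i j, i ≠ j → ¬ RepEquiv (ρ i) (ρ j)) (i j : ι) :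
    ∑ g : G, trace ℂ (V j) (ρ j g⁻¹) * trace ℂ (V i) (ρ i g)
      = if i = j then (Fintype.card G : ℂ) else 0 := by
  classical
  rw [sum_char_mul (ρ j) (ρ i)]
  by_cases h : i = j
  · subst h
    rw [finrank_invariants_linHom_self (hirr i)]
    simp
  · rw [invariants_linHom_eq_bot (hirr j) (hirr i) (hdist j i (Ne.symm h))]
    simp [h]

lemma sum_finrank_mul_char (hirr : ∀ i, IsIrreducibleRep (ρ i))
    (hdist : ∀ i j, i ≠ j → ¬ RepEquiv (ρ i) (ρ j))
    (hcomplete : ∀ (W : Type) [AddCommGroup W] [Module ℂ W] [FiniteDimensional ℂ W]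
      (π : Representation ℂ G W), IsIrreducibleRep π → ∃ i, RepEquiv π (ρ i))
    (g : G) :
    ∑ i, (finrank ℂ (V i) : ℂ) * trace ℂ (V i) (ρ i g)
      = if g = 1 then (Fintype.card G : ℂ) else 0 := by
  classical
  obtain ⟨m, hm⟩ := char_decomp ρ hcomplete (finrank ℂ (G → ℂ)) (G → ℂ) (regRep G) le_rfl
  have hcard : (Fintype.card G : ℂ) ≠ 0 := Nat.cast_ne_zero.mpr Fintype.card_ne_zero
  have key : ∀ j, (m j : ℂ) = (finrank ℂ (V j) : ℂ) := by
    intro j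
    have h1 : ∑ g : G, trace ℂ (G → ℂ) (regRep G g⁻¹) * trace ℂ (V j) (ρ j g)
        = (Fintype.card G : ℂ) * (finrank ℂ (V j) : ℂ) := by
      rw [Finset.sum_congr rfl (fun g _ => by
        rw [trace_regRep, inv_eq_one, ite_mul, zero_mul])]
      rw [Finset.sum_ite_eq' Finset.univ (1 : G)
        (fun g => (Fintype.card G : ℂ) * trace ℂ (V j) (ρ j g))]
      simp [trace_one]
    have h2 : ∑ g : G, trace ℂ (G → ℂ) (regRep G g⁻¹) * trace ℂ (V j) (ρ j g)
        = (m j : ℂ) * (Fintype.card G : ℂ) := by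
      calc ∑ g : G, trace ℂ (G → ℂ) (regRep G g⁻¹) * trace ℂ (V j) (ρ j g)
          = ∑ g : G, ∑ k, (m k : ℂ) *
              (trace ℂ (V k) (ρ k g⁻¹) * trace ℂ (V j) (ρ j g)) := by
            refine Finset.sum_congr rfl fun g _ => ?_
            rw [hm g⁻¹, Finset.sum_mul]
            exact Finset.sum_congr rfl fun k _ => (mul_assoc _ _ _)
        _ = ∑ k, (m k : ℂ) * ∑ g : G, trace ℂ (V k) (ρ k g⁻¹) * trace ℂ (V j) (ρ j g) := by
            rw [Finset.sum_comm]
            exact Finset.sum_congr rfl fun k _ => (Finset.mul_sum _ _ _).symm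
        _ = ∑ k, (m k : ℂ) * (if j = k then (Fintype.card G : ℂ) else 0) := by
            exact Finset.sum_congr rfl fun k _ => by rw [ortho ρ hirr hdist j k]
        _ = (m j : ℂ) * (Fintype.card G : ℂ) := by
            rw [Finset.sum_congr rfl (fun k _ => by rw [mul_ite, mul_zero]),
              Finset.sum_ite_eq Finset.univ j (fun k => (m k : ℂ) * (Fintype.card G : ℂ))]
            simp
    have h3 := h1.symm.trans h2
    exact mul_left_cancel₀ hcard ((h3.trans (mul_comm _ _)).symm)
  rw [Finset.sum_congr rfl (fun i _ => by rw [← key i]), ← hm g, trace_regRep]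

end Final

/-- Fourier inversion for finite groups: for every `f : G → ℂ` and `x ∈ G`,
`f x = (1/|G|) ∑_{Π ∈ Ĝ} d_Π · tr(Π(x⁻¹) Π(f))`, where `Π(f) = ∑_y f(y) Π(y)` and the sum runs
over a complete set of representatives of the irreducible complex representations of `G`. -/
theorem fourier_inversion (G : Type) [Group G] [Fintype G]
    (ι : Type) [Fintype ι] (V : ι → Type)
    [∀ i, AddCommGroup (V i)] [∀ i, Module ℂ (V i)] [∀ i, FiniteDimensional ℂ (V i)]
    (ρ : ∀ i, Representation ℂ G (V i))
    (hirr : ∀ i, IsIrreducibleRep (ρ i))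
    (hdist : ∀ i j, i ≠ j → ¬ RepEquiv (ρ i) (ρ j))
    (hcomplete : ∀ (W : Type) [AddCommGroup W] [Module ℂ W] [FiniteDimensional ℂ W]
      (π : Representation ℂ G W), IsIrreducibleRep π → ∃ i, RepEquiv π (ρ i))
    (f : G → ℂ) (x : G) :
    f x = (Fintype.card G : ℂ)⁻¹ *
      ∑ i, (Module.finrank ℂ (V i) : ℂ) *
        LinearMap.trace ℂ (V i) (ρ i x⁻¹ ∘ₗ (∑ y : G, f y • ρ i y)) := by
  classical
  have hcard : (Fintype.card G : ℂ) ≠ 0 := Nat.cast_ne_zero.mpr Fintype.card_ne_zero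
  have htr : ∀ i, trace ℂ (V i) (ρ i x⁻¹ ∘ₗ (∑ y : G, f y • ρ i y))
      = ∑ y : G, f y * trace ℂ (V i) (ρ i (x⁻¹ * y)) := by
    intro i
    have hcomp : (ρ i x⁻¹ ∘ₗ (∑ y : G, f y • ρ i y)) = ∑ y : G, f y • ρ i (x⁻¹ * y) := by
      apply LinearMap.ext; intro v
      simp only [LinearMap.coe_comp, Function.comp_apply, LinearMap.coe_sum, Finset.sum_apply,
        LinearMap.smul_apply, map_sum, map_smul, map_mul, Module.End.mul_apply]
    rw [hcomp, map_sum]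
    exact Finset.sum_congr rfl fun y _ => by rw [map_smul, smul_eq_mul]
  rw [Finset.sum_congr rfl (fun i _ => by rw [htr i])]
  rw [Finset.sum_congr rfl (fun i (_ : i ∈ Finset.univ) =>
    Finset.mul_sum Finset.univ (fun y => f y * trace ℂ (V i) (ρ i (x⁻¹ * y)))
      ((finrank ℂ (V i) : ℂ))), Finset.sum_comm]
  have hy : ∀ y : G, ∑ i, (finrank ℂ (V i) : ℂ) * (f y * trace ℂ (V i) (ρ i (x⁻¹ * y)))
      = f y * (if x⁻¹ * y = 1 then (Fintype.card G : ℂ) else 0) := by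
    intro y
    rw [← sum_finrank_mul_char ρ hirr hdist hcomplete (x⁻¹ * y), Finset.mul_sum]
    exact Finset.sum_congr rfl fun i _ => by ring
  rw [Finset.sum_congr rfl (fun y _ => hy y)]
  have hcond : ∀ y : G, (x⁻¹ * y = 1) = (y = x) := by
    intro y
    rw [eq_iff_iff, inv_mul_eq_one, eq_comm]
  rw [Finset.sum_congr rfl (fun y (_ : y ∈ Finset.univ) => by rw [hcond y, mul_ite, mul_zero]),
    Finset.sum_ite_eq' Finset.univ x (fun y => f y * (Fintype.card G : ℂ))]
  rw [if_pos (Finset.mem_univ x)]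
  field_simp
end

section
/- For a finite group G and an irreducible complex representation Π of dimension d_Π, the integer |G|/d_Π is a (rational) algebraic integer, hence d_Π divides |G|. -/
section Aux

open Module LinearMap Polynomial

/-- Schur's lemma: an endomorphism commuting with an irreducible representation is scalar. -/
theorem DegreeDvdAux.schur_scalar {G V : Type*} [Group G] [AddCommGroup V] [Module ℂ V]
    [FiniteDimensional ℂ V] (ρ : Representation ℂ G V)
    (hnt : Nontrivial V)
    (hirr : ∀ U : Submodule ℂ V, (∀ g : G, ∀ v ∈ U, ρ g v ∈ U) → U = ⊥ ∨ U = ⊤)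
    (f : Module.End ℂ V) (hf : ∀ g : G, ρ g * f = f * ρ g) :
    ∃ μ : ℂ, f = μ • (1 : Module.End ℂ V) := by
  haveI := hnt
  obtain ⟨μ, hμ⟩ := Module.End.exists_eigenvalue f
  refine ⟨μ, ?_⟩
  set U : Submodule ℂ V := Module.End.eigenspace f μ with hU
  have hinv : ∀ g : G, ∀ v ∈ U, ρ g v ∈ U := by
    intro g v hv
    rw [Module.End.mem_eigenspace_iff] at hv ⊢
    have := congrArg (fun (t : Module.End ℂ V) => t v) (hf g)
    simp only [Module.End.mul_apply] at this
    rw [← this, hv, map_smul]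
  rcases hirr U hinv with h | h
  · exact absurd h hμ
  · ext v
    have hv : v ∈ U := h ▸ Submodule.mem_top
    rw [Module.End.mem_eigenspace_iff] at hv
    simpa using hv

theorem DegreeDvdAux.eval_charpoly {m : Type*} [Fintype m] [DecidableEq m] {R : Type*} [CommRing R]
    (M : Matrix m m R) (x : R) : M.charpoly.eval x = (x • (1 : Matrix m m R) - M).det := by
  rw [Matrix.charpoly, ← Polynomial.coe_evalRingHom, RingHom.map_det]
  congr 1
  ext i j
  by_cases h : i = j <;>
    simp [h, Matrix.charmatrix_apply_eq, Matrix.charmatrix_apply_ne, Matrix.one_apply,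
      Matrix.sub_apply, Matrix.smul_apply]

open Matrix in
/-- The trace of a complex matrix of finite order is an algebraic integer. -/
theorem DegreeDvdAux.trace_integral_of_pow_eq_one {m : Type*} [Fintype m] [DecidableEq m]
    (M : Matrix m m ℂ) {n : ℕ} (hn : n ≠ 0) (hM : M ^ n = 1) : IsIntegral ℤ M.trace := by
  rw [Matrix.trace_eq_sum_roots_charpoly]
  refine IsIntegral.multiset_sum ?_
  intro x hx
  have hroot : M.charpoly.eval x = 0 := Polynomial.isRoot_of_mem_roots hx
  rw [DegreeDvdAux.eval_charpoly] at hroot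
  obtain ⟨v, hv, hMv⟩ := (Matrix.exists_mulVec_eq_zero_iff).2 hroot
  have hev : M.mulVec v = x • v := by
    have h2 : (x • 1 - M) *ᵥ v = x • v - M *ᵥ v := by
      rw [Matrix.sub_mulVec, Matrix.smul_mulVec, Matrix.one_mulVec]
    rw [hMv] at h2
    exact (sub_eq_zero.mp h2.symm).symm
  have hpow : ∀ k : ℕ, (M ^ k) *ᵥ v = x ^ k • v := by
    intro k
    induction k with
    | zero => simp
    | succ k ih =>
      rw [pow_succ, pow_succ, ← Matrix.mulVec_mulVec, hev]
      rw [Matrix.mulVec_smul, ih, smul_smul, mul_comm]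
  have hxn : x ^ n = 1 := by
    have h1 := hpow n
    rw [hM, Matrix.one_mulVec] at h1
    obtain ⟨i, hi⟩ := Function.ne_iff.mp hv
    have h2 := congrFun h1 i
    simp only [Pi.smul_apply, smul_eq_mul] at h2
    have : x ^ n * v i = 1 * v i := by rw [← h2, one_mul]
    exact mul_right_cancel₀ hi this
  refine ⟨X ^ n - C 1, Polynomial.monic_X_pow_sub_C 1 hn, ?_⟩
  simp [hxn]

open scoped Classical in
/-- The class sum of `g` in the integral group algebra. -/
noncomputable def DegreeDvdAux.classSum {G : Type*} [Group G] [Fintype G] (g : G) :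
    MonoidAlgebra ℤ G :=
  ∑ h ∈ Finset.univ.filter (fun h => IsConj g h), MonoidAlgebra.single h (1 : ℤ)

open scoped Classical in
theorem DegreeDvdAux.classSum_central {G : Type*} [Group G] [Fintype G] (g : G)
    (x : MonoidAlgebra ℤ G) :
    x * DegreeDvdAux.classSum g = DegreeDvdAux.classSum g * x := by
  induction x using MonoidAlgebra.induction_on with
  | of k =>
    rw [MonoidAlgebra.of_apply, DegreeDvdAux.classSum, Finset.sum_mul, Finset.mul_sum]
    rw [Finset.sum_nbij' (i := fun h => k * h * k⁻¹) (j := fun h => k⁻¹ * h * k)]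
    · intro h hh
      simp only [Finset.mem_filter, Finset.mem_univ, true_and, isConj_iff] at hh ⊢
      obtain ⟨c, hc⟩ := hh
      exact ⟨k * c, by rw [← hc]; group⟩
    · intro h hh
      simp only [Finset.mem_filter, Finset.mem_univ, true_and, isConj_iff] at hh ⊢
      obtain ⟨c, hc⟩ := hh
      exact ⟨k⁻¹ * c, by rw [← hc]; group⟩
    · intro h _; group
    · intro h _; group
    · intro h _
      rw [MonoidAlgebra.single_mul_single, MonoidAlgebra.single_mul_single]
      congr 1
      group
  | add f g hf hg => rw [add_mul, mul_add, hf, hg]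
  | smul r f hf => rw [smul_mul_assoc, mul_smul_comm, hf]

theorem DegreeDvdAux.classSum_isIntegral {G : Type*} [Group G] [Fintype G] (g : G) :
    IsIntegral ℤ (DegreeDvdAux.classSum g) := by
  have hmem : DegreeDvdAux.classSum g ∈ Subalgebra.center ℤ (MonoidAlgebra ℤ G) := by
    rw [Subalgebra.mem_center_iff]
    exact fun x => DegreeDvdAux.classSum_central g x
  haveI : Module.Finite ℤ (MonoidAlgebra ℤ G) :=
    Module.Finite.equiv ((Finsupp.linearEquivFunOnFinite ℤ ℤ G).symm.trans (MonoidAlgebra.coeffLinearEquiv ℤ).symm)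
  haveI : IsNoetherian ℤ (MonoidAlgebra ℤ G) := isNoetherian_of_isNoetherianRing_of_finite ℤ _
  haveI : Module.Finite ℤ (Subalgebra.center ℤ (MonoidAlgebra ℤ G)) :=
    Module.Finite.iff_fg.mpr
      (IsNoetherian.noetherian (Subalgebra.toSubmodule (Subalgebra.center ℤ (MonoidAlgebra ℤ G))))
  have : IsIntegral ℤ (⟨DegreeDvdAux.classSum g, hmem⟩ :
      Subalgebra.center ℤ (MonoidAlgebra ℤ G)) := IsIntegral.of_finite ℤ _
  exact IsIntegral.map (Subalgebra.center ℤ (MonoidAlgebra ℤ G)).val this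

section OrthAux

variable {G V : Type*} [Group G] [Fintype G] [AddCommGroup V] [Module ℂ V]
    [FiniteDimensional ℂ V]

theorem DegreeDvdAux.avg_commutes (ρ : Representation ℂ G V) (f : Module.End ℂ V) (k : G) :
    ρ k * (∑ g : G, ρ g * f * ρ g⁻¹) = (∑ g : G, ρ g * f * ρ g⁻¹) * ρ k := by
  rw [Finset.mul_sum, Finset.sum_mul]
  refine Fintype.sum_equiv (Equiv.mulLeft k) _ _ (fun g => ?_)
  simp only [Equiv.coe_mulLeft]
  rw [mul_assoc (ρ (k * g) * f), ← _root_.map_mul ρ, show (k * g)⁻¹ * k = g⁻¹ by group,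
    _root_.map_mul ρ k g]
  noncomm_ring

omit [FiniteDimensional ℂ V] in
theorem DegreeDvdAux.avg_trace (ρ : Representation ℂ G V) (f : Module.End ℂ V) :
    LinearMap.trace ℂ V (∑ g : G, ρ g * f * ρ g⁻¹) =
      (Fintype.card G : ℂ) * LinearMap.trace ℂ V f := by
  rw [map_sum]
  rw [Finset.sum_congr rfl (fun g _ => ?_), Finset.sum_const, Finset.card_univ,
    nsmul_eq_mul]
  rw [trace_mul_comm, ← mul_assoc, ← _root_.map_mul, inv_mul_cancel, map_one, one_mul]

/-- Self-orthogonality of the character of an irreducible representation. -/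
theorem DegreeDvdAux.sum_char_mul_char (ρ : Representation ℂ G V) (hnt : Nontrivial V)
    (hirr : ∀ U : Submodule ℂ V, (∀ g : G, ∀ v ∈ U, ρ g v ∈ U) → U = ⊥ ∨ U = ⊤) :
    ∑ g : G, LinearMap.trace ℂ V (ρ g) * LinearMap.trace ℂ V (ρ g⁻¹) =
      (Fintype.card G : ℂ) := by
  haveI := hnt
  set d := Module.finrank ℂ V with hd
  have hdpos : 0 < d := Module.finrank_pos
  have hdne : (d : ℂ) ≠ 0 := Nat.cast_ne_zero.mpr hdpos.ne'
  set b := Module.finBasis ℂ V with hb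
  set T := LinearMap.toMatrixAlgEquiv b with hT
  have hentry0 : ∀ (A B : Matrix (Fin d) (Fin d) ℂ) (i j : Fin d),
      (A * Matrix.single i j (1:ℂ) * B) i j = A i i * B j j := by
    intro A B i j
    rw [Matrix.mul_assoc, Matrix.mul_apply, Finset.sum_eq_single i]
    · rw [Matrix.single_mul_apply_same, one_mul]
    · intro l _ hl
      rw [Matrix.single_mul_apply_of_ne _ i j l j hl, mul_zero]
    · intro h; exact absurd (Finset.mem_univ i) h
  have key : ∀ i j : Fin d, (∑ g : G, T (ρ g) i i * T (ρ g⁻¹) j j) =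
      if i = j then (Fintype.card G : ℂ) / d else 0 := by
    intro i j
    set f := T.symm (Matrix.single i j 1) with hf
    obtain ⟨μ, hμ⟩ := DegreeDvdAux.schur_scalar ρ hnt hirr (∑ g : G, ρ g * f * ρ g⁻¹)
      (fun k => DegreeDvdAux.avg_commutes ρ f k)
    have htrf : LinearMap.trace ℂ V f = if i = j then 1 else 0 := by
      rw [LinearMap.trace_eq_matrix_trace ℂ b, hf]
      have h2 : LinearMap.toMatrix b b (T.symm (Matrix.single i j 1)) =
          Matrix.single i j 1 := by simp [hT, LinearMap.toMatrixAlgEquiv]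
      rw [h2]
      by_cases h : i = j
      · subst h; simp
      · rw [Matrix.trace_single_eq_of_ne i j 1 h, if_neg h]
    have htr : μ * d = (Fintype.card G : ℂ) * (if i = j then 1 else 0) := by
      have h1 := DegreeDvdAux.avg_trace ρ f
      rw [hμ, map_smul, LinearMap.trace_one, htrf] at h1
      rw [← h1]
      simp [hd, mul_comm]
    have hmat := congrArg T hμ
    rw [map_sum, map_smul, map_one] at hmat
    have hsum : ∀ g : G, T (ρ g * f * ρ g⁻¹) =
        T (ρ g) * Matrix.single i j 1 * T (ρ g⁻¹) := by
      intro g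
      rw [_root_.map_mul, _root_.map_mul, hf, AlgEquiv.apply_symm_apply]
    have hLHS : ∑ g : G, T (ρ g) i i * T (ρ g⁻¹) j j = μ * (if i = j then 1 else 0) := by
      calc ∑ g : G, T (ρ g) i i * T (ρ g⁻¹) j j
          = ∑ g : G, (T (ρ g * f * ρ g⁻¹)) i j := by
            refine Finset.sum_congr rfl fun g _ => ?_
            rw [hsum g, hentry0]
        _ = (∑ g : G, T (ρ g * f * ρ g⁻¹)) i j := by
            rw [Matrix.sum_apply]
        _ = (μ • (1 : Matrix (Fin d) (Fin d) ℂ)) i j := by rw [hmat]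
        _ = μ * (if i = j then 1 else 0) := by
            rw [Matrix.smul_apply, Matrix.one_apply, smul_eq_mul]
    rw [hLHS]
    by_cases h : i = j
    · rw [if_pos h, if_pos h, mul_one]
      rw [if_pos h, mul_one] at htr
      field_simp [htr]
      exact htr
    · rw [if_neg h, if_neg h, mul_zero]
  have hχ : ∀ g : G, LinearMap.trace ℂ V (ρ g) = ∑ i, T (ρ g) i i := by
    intro g
    rw [LinearMap.trace_eq_matrix_trace ℂ b]
    simp [hT, LinearMap.toMatrixAlgEquiv, Matrix.trace, Matrix.diag]
  calc ∑ g : G, LinearMap.trace ℂ V (ρ g) * LinearMap.trace ℂ V (ρ g⁻¹)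
      = ∑ g : G, ∑ i, ∑ j, T (ρ g) i i * T (ρ g⁻¹) j j := by
        refine Finset.sum_congr rfl fun g _ => ?_
        rw [hχ g, hχ g⁻¹, Finset.sum_mul_sum]
    _ = ∑ i, ∑ j, ∑ g : G, T (ρ g) i i * T (ρ g⁻¹) j j := by
        rw [Finset.sum_comm]
        refine Finset.sum_congr rfl fun i _ => Finset.sum_comm
    _ = ∑ i : Fin d, ((Fintype.card G : ℂ) / d) := by
        refine Finset.sum_congr rfl fun i _ => ?_
        rw [Finset.sum_congr rfl fun j _ => key i j]
        simp
    _ = (Fintype.card G : ℂ) := by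
        rw [Finset.sum_const, Finset.card_univ, Fintype.card_fin, nsmul_eq_mul]
        field_simp

end OrthAux

end Aux

section CharInt

variable {G V : Type*} [Group G] [Fintype G] [AddCommGroup V] [Module ℂ V]
    [FiniteDimensional ℂ V]

theorem DegreeDvdAux.char_isIntegral (ρ : Representation ℂ G V) (g : G) :
    IsIntegral ℤ (LinearMap.trace ℂ V (ρ g)) := by
  set b := Module.finBasis ℂ V with hb
  set T := LinearMap.toMatrixAlgEquiv b with hT
  have h1 : LinearMap.trace ℂ V (ρ g) = (T (ρ g)).trace := by
    rw [LinearMap.trace_eq_matrix_trace ℂ b]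
    rfl
  rw [h1]
  haveI : Nonempty G := ⟨1⟩
  refine DegreeDvdAux.trace_integral_of_pow_eq_one _ (Fintype.card_ne_zero (α := G)) ?_
  rw [← map_pow, ← map_pow, pow_card_eq_one, map_one, map_one]

end CharInt

/-- For a finite group `G` and an irreducible complex representation `ρ` of dimension `d`,
the quotient `|G|/d` is an algebraic integer, hence `d` divides `|G|`. -/
theorem degree_dvd_card (G : Type*) [Group G] [Fintype G]
    (V : Type*) [AddCommGroup V] [Module ℂ V] [FiniteDimensional ℂ V]
    (ρ : Representation ℂ G V) (hρ : IsIrreducibleRep ρ) :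
    IsIntegral ℤ ((Fintype.card G : ℂ) / (Module.finrank ℂ V : ℂ)) ∧
      Module.finrank ℂ V ∣ Fintype.card G := by
  classical
  obtain ⟨hnt, hirr⟩ := hρ
  haveI := hnt
  have hdpos : 0 < Module.finrank ℂ V := Module.finrank_pos
  set d := Module.finrank ℂ V with hd
  have hdne : (d : ℂ) ≠ 0 := Nat.cast_ne_zero.mpr hdpos.ne'
  have hdneQ : (d : ℚ) ≠ 0 := Nat.cast_ne_zero.mpr hdpos.ne'
  set χ : G → ℂ := fun g => LinearMap.trace ℂ V (ρ g) with hχdef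
  have hχint : ∀ g, IsIntegral ℤ (χ g) := DegreeDvdAux.char_isIntegral ρ
  have hχconj : ∀ g h : G, IsConj g h → χ h = χ g := by
    intro g h hc
    rw [isConj_iff] at hc
    obtain ⟨c, hc⟩ := hc
    show LinearMap.trace ℂ V (ρ h) = LinearMap.trace ℂ V (ρ g)
    rw [← hc, _root_.map_mul ρ, _root_.map_mul ρ, LinearMap.trace_mul_comm, ← mul_assoc,
      ← _root_.map_mul ρ, inv_mul_cancel, _root_.map_one ρ, one_mul]
  set φ : MonoidAlgebra ℤ G →+* Module.End ℂ V :=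
    MonoidAlgebra.liftNCRingHom (Int.castRingHom (Module.End ℂ V)) (ρ : G →* Module.End ℂ V)
      (fun x y => Int.cast_commute x _) with hφdef
  have hφsingle : ∀ k : G, φ (MonoidAlgebra.single k (1 : ℤ)) = ρ k := by
    intro k
    simp [hφdef, MonoidAlgebra.liftNCRingHom, MonoidAlgebra.liftNC_single]
  have class_fact : ∀ c : ConjClasses G, ∃ (ω : ℂ) (r : G), IsIntegral ℤ ω ∧
      ConjClasses.mk r = c ∧
      ω * d = ∑ g ∈ Finset.univ.filter (fun g => ConjClasses.mk g = c), χ g := by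
    intro c
    obtain ⟨r, hr⟩ := c.exists_rep
    set Tr := φ (DegreeDvdAux.classSum r) with hTr
    have hTrsum : Tr = ∑ h ∈ Finset.univ.filter (fun h => IsConj r h), ρ h := by
      rw [hTr, DegreeDvdAux.classSum, map_sum]
      exact Finset.sum_congr rfl fun h _ => hφsingle h
    have hcomm : ∀ k : G, ρ k * Tr = Tr * ρ k := by
      intro k
      have h1 := congrArg φ (DegreeDvdAux.classSum_central r (MonoidAlgebra.single k 1))
      rw [_root_.map_mul, _root_.map_mul, hφsingle] at h1
      exact h1
    obtain ⟨ω, hω⟩ := DegreeDvdAux.schur_scalar ρ hnt hirr Tr hcomm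
    haveI : Nontrivial (Module.End ℂ V) := by
      obtain ⟨v, hv⟩ := exists_ne (0 : V)
      exact ⟨1, 0, fun h => hv (by simpa using congrArg (fun (t : Module.End ℂ V) => t v) h)⟩
    have hint : IsIntegral ℤ ω := by
      have h2 : IsIntegral ℤ Tr := by
        have := IsIntegral.map φ.toIntAlgHom (DegreeDvdAux.classSum_isIntegral r)
        simpa using this
      rw [hω, ← Algebra.algebraMap_eq_smul_one] at h2
      exact (isIntegral_algebraMap_iff (algebraMap ℂ (Module.End ℂ V)).injective).mp h2
    refine ⟨ω, r, hint, hr, ?_⟩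
    have ht1 : LinearMap.trace ℂ V Tr = ω * d := by
      rw [hω, map_smul, LinearMap.trace_one, smul_eq_mul, hd]
    have hfilter : Finset.univ.filter (fun g => ConjClasses.mk g = c) =
        Finset.univ.filter (fun h => IsConj r h) := by
      ext g
      simp only [Finset.mem_filter, Finset.mem_univ, true_and, ← hr,
        ConjClasses.mk_eq_mk_iff_isConj]
      exact ⟨fun h => h.symm, fun h => h.symm⟩
    have ht2 : LinearMap.trace ℂ V Tr =
        ∑ g ∈ Finset.univ.filter (fun g => ConjClasses.mk g = c), χ g := by
      rw [hTrsum, map_sum, hfilter]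
    rw [← ht1, ht2]
  choose ω r hωint hmk hωd using class_fact
  have horth := DegreeDvdAux.sum_char_mul_char ρ hnt hirr
  have hfib : ∑ c : ConjClasses G,
      ∑ g ∈ Finset.univ.filter (fun g => ConjClasses.mk g = c), χ g * χ g⁻¹ =
      (Fintype.card G : ℂ) := by
    rw [Finset.sum_fiberwise Finset.univ ConjClasses.mk (fun g => χ g * χ g⁻¹)]
    exact horth
  have hinner : ∀ c : ConjClasses G,
      ∑ g ∈ Finset.univ.filter (fun g => ConjClasses.mk g = c), χ g * χ g⁻¹ =
      (ω c * d) * χ (r c)⁻¹ := by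
    intro c
    rw [hωd c, Finset.sum_mul]
    refine Finset.sum_congr rfl fun g hg => ?_
    rw [Finset.mem_filter] at hg
    have hconj : IsConj (r c) g := by rw [← ConjClasses.mk_eq_mk_iff_isConj, hmk c, hg.2]
    have hci : IsConj (r c)⁻¹ g⁻¹ := by
      rw [isConj_iff] at hconj ⊢
      obtain ⟨u, hu⟩ := hconj
      exact ⟨u, by rw [← hu]; group⟩
    rw [hχconj _ _ hci]
  have hS : (Fintype.card G : ℂ) = d * ∑ c : ConjClasses G, ω c * χ (r c)⁻¹ := by
    rw [← hfib, Finset.sum_congr rfl fun c _ => hinner c, Finset.mul_sum]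
    exact Finset.sum_congr rfl fun c _ => by ring
  have hSint : IsIntegral ℤ (∑ c : ConjClasses G, ω c * χ (r c)⁻¹) :=
    IsIntegral.sum _ fun c _ => (hωint c).mul (hχint _)
  have hdiv : (Fintype.card G : ℂ) / (d : ℂ) = ∑ c : ConjClasses G, ω c * χ (r c)⁻¹ := by
    rw [hS]
    field_simp
  constructor
  · rw [hdiv]; exact hSint
  · letI : IsIntegrallyClosed ℤ := GCDMonoid.toIsIntegrallyClosed
    have hq : IsIntegral ℤ ((Fintype.card G : ℚ) / (d : ℚ)) := by
      refine (isIntegral_algebraMap_iff (algebraMap ℚ ℂ).injective).mp ?_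
      have hcast : (algebraMap ℚ ℂ) ((Fintype.card G : ℚ) / (d : ℚ)) =
          (Fintype.card G : ℂ) / (d : ℂ) := by
        rw [eq_div_iff hdne]
        push_cast
        field_simp
      rw [hcast, hdiv]
      exact hSint
    obtain ⟨y, hy⟩ := IsIntegrallyClosed.isIntegral_iff.mp hq
    have hyq : (y : ℚ) = (Fintype.card G : ℚ) / (d : ℚ) := by exact_mod_cast hy
    have hyd : (y : ℚ) * d = (Fintype.card G : ℚ) := by
      rw [hyq]
      field_simp
    have hZ : y * (d : ℤ) = (Fintype.card G : ℤ) := by exact_mod_cast hyd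
    have hdvd : (d : ℤ) ∣ (Fintype.card G : ℤ) := ⟨y, by rw [← hZ]; ring⟩
    exact_mod_cast hdvd
end

section
/- Mackey's restriction formula for class functions: with G finite, Γ₁, Γ₂ ≤ G, and a set S of double coset representatives of Γ₁\G/Γ₂, for any class function φ on Γ₂ one has Res_{Γ₁}(Ind_{Γ₂}^G φ) = Σ_{s∈S} Ind_{Γ₂(s)→Γ₁} φ_s, where Γ₂(s) = sΓ₂s⁻¹ ∩ Γ₁ and φ_s(γ) = φ(s⁻¹γs). -/
open scoped Classical

/-- Induction of class functions: `(indCF Γ φ)(x) = (1/|Γ|) ∑_{y ∈ G, yxy⁻¹ ∈ Γ} φ(yxy⁻¹)`. -/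
noncomputable def indCF {G : Type*} [Group G] [Fintype G] (Γ : Subgroup G) [Fintype Γ]
    (φ : Γ → ℂ) (x : G) : ℂ :=
  (Fintype.card Γ : ℂ)⁻¹ * ∑ y : G, if h : y * x * y⁻¹ ∈ Γ then φ ⟨y * x * y⁻¹, h⟩ else 0

/-- The fibre of the map `(a, b) ↦ b⁻¹ s⁻¹ a` over a point of its image has cardinality
`|Γ₁ ∩ sΓ₂s⁻¹|`. -/
lemma mackey_fiber_card {G : Type*} [Group G] [Fintype G] (Γ₁ Γ₂ : Subgroup G)
    (s y a₀ b₀ : G) (ha₀ : a₀ ∈ Γ₁) (hb₀ : b₀ ∈ Γ₂) (hy : y = b₀⁻¹ * s⁻¹ * a₀) :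
    (Finset.univ.filter (fun p : Γ₁ × Γ₂ => (p.2 : G)⁻¹ * s⁻¹ * (p.1 : G) = y)).card
      = Nat.card {g : G // g ∈ Γ₁ ∧ s⁻¹ * g * s ∈ Γ₂} := by
  classical
  rw [Nat.card_eq_fintype_card, Fintype.card_subtype]
  refine Finset.card_bij' (fun p _ => (p.1 : G) * a₀⁻¹)
    (fun g hg => (⟨g * a₀, ?_⟩, ⟨s⁻¹ * g * s * b₀, ?_⟩)) ?_ ?_ ?_ ?_
  · have := (Finset.mem_filter.1 hg).2
    exact mul_mem this.1 ha₀
  · have := (Finset.mem_filter.1 hg).2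
    exact mul_mem this.2 hb₀
  · rintro ⟨a, b⟩ hp
    have hp' : (b : G)⁻¹ * s⁻¹ * (a : G) = y := (Finset.mem_filter.1 hp).2
    rw [Finset.mem_filter]
    refine ⟨Finset.mem_univ _, mul_mem a.2 (inv_mem ha₀), ?_⟩
    have key : s⁻¹ * ((a : G) * a₀⁻¹) * s
        = (b : G) * ((b : G)⁻¹ * s⁻¹ * (a : G)) * (a₀⁻¹ * s * b₀) * b₀⁻¹ := by group
    rw [key, hp', hy]
    have : (b : G) * (b₀⁻¹ * s⁻¹ * a₀) * (a₀⁻¹ * s * b₀) * b₀⁻¹ = (b : G) * b₀⁻¹ := by group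
    rw [this]
    exact mul_mem b.2 (inv_mem hb₀)
  · intro g hg
    rw [Finset.mem_filter]
    refine ⟨Finset.mem_univ _, ?_⟩
    simp only [hy]
    group
  · rintro ⟨a, b⟩ hp
    have hp' : (b : G)⁻¹ * s⁻¹ * (a : G) = y := (Finset.mem_filter.1 hp).2
    have key : s⁻¹ * ((a : G) * a₀⁻¹) * s
        = (b : G) * ((b : G)⁻¹ * s⁻¹ * (a : G)) * (a₀⁻¹ * s * b₀) * b₀⁻¹ := by group
    have hb : s⁻¹ * ((a : G) * a₀⁻¹) * s = (b : G) * b₀⁻¹ := by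
      rw [key, hp', hy]; group
    refine Prod.ext ?_ ?_ <;> apply Subtype.ext
    · show (a : G) * a₀⁻¹ * a₀ = (a : G)
      group
    · show s⁻¹ * ((a : G) * a₀⁻¹) * s * b₀ = (b : G)
      rw [hb]; group
  · intro g hg
    show g * a₀ * a₀⁻¹ = g
    group

private lemma mackey_div_aux {a b x y : ℂ} (ha : a ≠ 0) (hb : b ≠ 0)
    (h : b * x = a * y) : a⁻¹ * x = b⁻¹ * y := by
  field_simp
  linear_combination h

/-- Mackey's restriction formula: if `S` is a set of representatives of the double cosets
`Γ₁\G/Γ₂` of a finite group `G`, then for any class function `φ` on `Γ₂` and `γ₁ ∈ Γ₁`,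
`(Ind_{Γ₂}^G φ)(γ₁) = ∑_{s ∈ S} (Ind_{Γ₂(s) → Γ₁} φ_s)(γ₁)`, where
`Γ₂(s) = sΓ₂s⁻¹ ∩ Γ₁` and `φ_s(γ) = φ(s⁻¹γs)`. -/
theorem mackey_restriction_formula (G : Type*) [Group G] [Fintype G]
    (Γ₁ Γ₂ : Subgroup G) [Fintype Γ₁] [Fintype Γ₂]
    (S : Finset G)
    (hS : ∀ g : G, ∃! s, s ∈ S ∧ ∃ a ∈ Γ₁, ∃ b ∈ Γ₂, g = a * s * b)
    (φ : Γ₂ → ℂ) (hφ : ∀ γ δ : Γ₂, φ (δ * γ * δ⁻¹) = φ γ) (γ₁ : Γ₁) :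
    indCF Γ₂ φ (↑γ₁)
      = ∑ s ∈ S, (Nat.card {g : G // g ∈ Γ₁ ∧ s⁻¹ * g * s ∈ Γ₂} : ℂ)⁻¹ *
          ∑ y : Γ₁, if h : s⁻¹ * (↑y * ↑γ₁ * (↑y)⁻¹) * s ∈ Γ₂
            then φ ⟨s⁻¹ * (↑y * ↑γ₁ * (↑y)⁻¹) * s, h⟩ else 0 := by
  classical
  set f : G → ℂ := fun x => if h : x * ↑γ₁ * x⁻¹ ∈ Γ₂ then φ ⟨x * ↑γ₁ * x⁻¹, h⟩ else 0 with hf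
  set P : G → G → Prop := fun s y => ∃ a ∈ Γ₁, ∃ b ∈ Γ₂, y⁻¹ = a * s * b with hP
  -- Step 1: each term of the RHS equals |Γ₂|⁻¹ ∑_{y : P s y} f y
  have key : ∀ s ∈ S,
      (Nat.card {g : G // g ∈ Γ₁ ∧ s⁻¹ * g * s ∈ Γ₂} : ℂ)⁻¹ *
          ∑ y : Γ₁, (if h : s⁻¹ * (↑y * ↑γ₁ * (↑y)⁻¹) * s ∈ Γ₂
            then φ ⟨s⁻¹ * (↑y * ↑γ₁ * (↑y)⁻¹) * s, h⟩ else 0)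
        = (Fintype.card Γ₂ : ℂ)⁻¹ * ∑ y ∈ Finset.univ.filter (P s), f y := by
    intro s _
    -- the summand of the double sum equals the summand of the theorem's inner sum
    have claim : ∀ (a : Γ₁) (b : Γ₂), f ((b : G)⁻¹ * s⁻¹ * (a : G)) =
        (if h : s⁻¹ * (↑a * ↑γ₁ * (↑a : G)⁻¹) * s ∈ Γ₂
          then φ ⟨s⁻¹ * (↑a * ↑γ₁ * (↑a : G)⁻¹) * s, h⟩ else 0) := by
      intro a b
      have hw : ((b : G)⁻¹ * s⁻¹ * ↑a) * ↑γ₁ * ((b : G)⁻¹ * s⁻¹ * (a : G))⁻¹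
          = (b : G)⁻¹ * (s⁻¹ * (↑a * ↑γ₁ * (↑a : G)⁻¹) * s) * (b : G) := by group
      simp only [hf, hw]
      set W : G := s⁻¹ * (↑a * ↑γ₁ * (↑a : G)⁻¹) * s with hW
      have hiff : (b : G)⁻¹ * W * (b : G) ∈ Γ₂ ↔ W ∈ Γ₂ := by
        rw [Γ₂.mul_mem_cancel_right b.2, Γ₂.mul_mem_cancel_left (inv_mem b.2)]
      by_cases h : W ∈ Γ₂
      · rw [dif_pos (hiff.2 h), dif_pos h]
        have : φ (b⁻¹ * ⟨W, h⟩ * b⁻¹⁻¹) = φ ⟨W, h⟩ := hφ ⟨W, h⟩ b⁻¹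
        rw [← this]
        congr 1
        apply Subtype.ext
        simp only [MulMemClass.coe_mul, InvMemClass.coe_inv, inv_inv]
        rfl
      · rw [dif_neg (fun hc => h (hiff.1 hc)), dif_neg h]
    -- double counting
    have hdouble : ∑ p : Γ₁ × Γ₂, f ((p.2 : G)⁻¹ * s⁻¹ * (p.1 : G))
        = (Fintype.card Γ₂ : ℂ) * ∑ y : Γ₁, (if h : s⁻¹ * (↑y * ↑γ₁ * (↑y)⁻¹) * s ∈ Γ₂
            then φ ⟨s⁻¹ * (↑y * ↑γ₁ * (↑y)⁻¹) * s, h⟩ else 0) := by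
      rw [Fintype.sum_prod_type]
      rw [Finset.mul_sum]
      refine Finset.sum_congr rfl fun a _ => ?_
      rw [Finset.sum_congr rfl fun b _ => claim a b, Finset.sum_const]
      simp [nsmul_eq_mul, Finset.card_univ]
    -- fibre counting
    have hcomp : ∑ p : Γ₁ × Γ₂, f ((p.2 : G)⁻¹ * s⁻¹ * (p.1 : G))
        = (Nat.card {g : G // g ∈ Γ₁ ∧ s⁻¹ * g * s ∈ Γ₂} : ℂ) *
            ∑ y ∈ Finset.univ.filter (P s), f y := by
      rw [Finset.sum_comp f (fun p : Γ₁ × Γ₂ => (p.2 : G)⁻¹ * s⁻¹ * (p.1 : G))]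
      have himage : (Finset.univ : Finset (Γ₁ × Γ₂)).image
          (fun p : Γ₁ × Γ₂ => (p.2 : G)⁻¹ * s⁻¹ * (p.1 : G)) = Finset.univ.filter (P s) := by
        ext y
        simp only [Finset.mem_image, Finset.mem_filter, Finset.mem_univ, true_and, hP]
        constructor
        · rintro ⟨⟨a, b⟩, rfl⟩
          exact ⟨(a : G)⁻¹, inv_mem a.2, b, b.2, by group⟩
        · rintro ⟨a, ha, b, hb, hab⟩
          refine ⟨(⟨a⁻¹, inv_mem ha⟩, ⟨b, hb⟩), ?_⟩
          have : y = b⁻¹ * s⁻¹ * a⁻¹ := by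
            rw [← inv_inv y, hab]; group
          rw [this]
      rw [himage, Finset.mul_sum]
      refine Finset.sum_congr rfl fun y hy => ?_
      have hy' : P s y := (Finset.mem_filter.1 hy).2
      obtain ⟨a, ha, b, hb, hab⟩ := hy'
      have hywit : y = b⁻¹ * s⁻¹ * a⁻¹ := by rw [← inv_inv y, hab]; group
      have := mackey_fiber_card Γ₁ Γ₂ s y a⁻¹ b (inv_mem ha) hb hywit
      rw [nsmul_eq_mul]
      congr 1
      rw [← this]
      norm_cast
      exact Finset.card_bij (fun p _ => p) (by simp) (by simp) (fun p hp => ⟨p, by simpa using hp, rfl⟩)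
    -- nonvanishing of the cardinalities
    have hc1 : (Nat.card {g : G // g ∈ Γ₁ ∧ s⁻¹ * g * s ∈ Γ₂} : ℂ) ≠ 0 := by
      have : Nonempty {g : G // g ∈ Γ₁ ∧ s⁻¹ * g * s ∈ Γ₂} :=
        ⟨⟨1, one_mem _, by simpa using one_mem Γ₂⟩⟩
      have hpos : 0 < Nat.card {g : G // g ∈ Γ₁ ∧ s⁻¹ * g * s ∈ Γ₂} := Nat.card_pos
      exact_mod_cast hpos.ne'
    have hc2 : (Fintype.card Γ₂ : ℂ) ≠ 0 := by
      have := Fintype.card_pos (α := Γ₂)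
      exact_mod_cast this.ne'
    -- from |Γ₂| * T = c * Σ, conclude c⁻¹ * T = |Γ₂|⁻¹ * Σ
    exact mackey_div_aux hc1 hc2 (hdouble.symm.trans hcomp)
  rw [Finset.sum_congr rfl key]
  rw [← Finset.mul_sum]
  rw [indCF]
  congr 1
  -- Step 2: the sets {y | P s y} for s ∈ S partition G
  have part : ∑ s ∈ S, ∑ y ∈ Finset.univ.filter (P s), f y = ∑ y : G, f y := by
    simp only [Finset.sum_filter]
    rw [Finset.sum_comm]
    refine Finset.sum_congr rfl fun y _ => ?_
    obtain ⟨s₀, ⟨hs₀S, hs₀⟩, huniq⟩ := hS y⁻¹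
    rw [Finset.sum_eq_single_of_mem s₀ hs₀S]
    · rw [if_pos hs₀]
    · intro t htS htne
      rw [if_neg]
      intro hPt
      exact htne (huniq t ⟨htS, hPt⟩)
  rw [part]
end

section
/- The character of an induced representation: if Γ ≤ G are finite groups with coset decomposition G = ⊔_{k=1}^n x_kΓ, and θ is a representation of Γ with character χ_θ, then the character of Ind_Γ^G θ at x equals Σ_{k : x_k⁻¹ x x_k ∈ Γ} χ_θ(x_k⁻¹ x x_k). -/
open scoped Classical

/-- The space of the representation of `G` induced by a representation `θ` of a subgroup `Γ`:
functions `f : G → V` with `f (x * γ) = θ γ⁻¹ (f x)`. -/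
noncomputable def IndCarrier {G : Type*} [Group G] (Γ : Subgroup G)
    {V : Type*} [AddCommGroup V] [Module ℂ V] (θ : Representation ℂ Γ V) :
    Submodule ℂ (G → V) where
  carrier := {f | ∀ (x : G) (γ : Γ), f (x * γ) = θ γ⁻¹ (f x)}
  add_mem' := by
    intro a b ha hb x γ
    simp only [Pi.add_apply, ha x γ, hb x γ, map_add]
  zero_mem' := by
    intro x γ
    simp
  smul_mem' := by
    intro c a ha x γ
    simp only [Pi.smul_apply, ha x γ, map_smul]

/-- The representation of `G` induced by a representation `θ` of a subgroup `Γ`, acting by left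
translation on `IndCarrier Γ θ`. -/
noncomputable def IndRep {G : Type*} [Group G] (Γ : Subgroup G)
    {V : Type*} [AddCommGroup V] [Module ℂ V] (θ : Representation ℂ Γ V) :
    Representation ℂ G (IndCarrier Γ θ) where
  toFun x :=
    { toFun := fun f => ⟨fun y => (f : G → V) (x⁻¹ * y), by
        intro y γ
        have h := f.2 (x⁻¹ * y) γ
        simpa [mul_assoc] using h⟩
      map_add' := by
        intro a b
        apply Subtype.ext
        funext y
        rfl
      map_smul' := by
        intro c a
        apply Subtype.ext
        funext y
        rfl }
  map_one' := by
    apply LinearMap.ext; intro f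
    apply Subtype.ext; funext y
    simp
  map_mul' := by
    intro a b
    apply LinearMap.ext; intro f
    apply Subtype.ext; funext y
    show (f : G → V) ((a * b)⁻¹ * y) = (f : G → V) (b⁻¹ * (a⁻¹ * y))
    rw [mul_inv_rev, mul_assoc]

/-- The character of an induced representation: if `G = ⊔_k x_k Γ` is a coset decomposition and
`θ` is a representation of `Γ` with character `χ_θ`, then the character of `Ind_Γ^G θ` at `x`
equals `∑_{k : x_k⁻¹ x x_k ∈ Γ} χ_θ (x_k⁻¹ x x_k)`. -/
theorem character_of_induced_representation (G : Type*) [Group G] [Fintype G] (Γ : Subgroup G)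
    (V : Type*) [AddCommGroup V] [Module ℂ V] [FiniteDimensional ℂ V]
    (θ : Representation ℂ Γ V)
    (n : ℕ) (xk : Fin n → G)
    (hcoset : ∀ g : G, ∃! k : Fin n, (xk k)⁻¹ * g ∈ Γ)
    (x : G) :
    LinearMap.trace ℂ (IndCarrier Γ θ) ((IndRep Γ θ) x)
      = ∑ k, if h : (xk k)⁻¹ * x * xk k ∈ Γ
          then LinearMap.trace ℂ V (θ ⟨(xk k)⁻¹ * x * xk k, h⟩) else 0 := by

  classical
  choose idx hmem huni using hcoset
  -- linear equivalence between the induced space and `Fin n → V`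
  have hidx_xk : ∀ k : Fin n, idx (xk k) = k := by
    intro k
    exact (huni (xk k) k (by simpa using Γ.one_mem)).symm
  have hidx_mul : ∀ (g : G) (γ : Γ), idx (g * γ) = idx g := by
    intro g γ
    refine (huni (g * γ) (idx g) ?_).symm
    have := hmem g
    have : ((xk (idx g))⁻¹ * g) * (γ : G) ∈ Γ := Γ.mul_mem this γ.2
    simpa [mul_assoc] using this
  let e : (IndCarrier Γ θ) ≃ₗ[ℂ] (Fin n → V) :=
    { toFun := fun f k => (f : G → V) (xk k)
      map_add' := fun a b => rfl
      map_smul' := fun c a => rfl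
      invFun := fun v => ⟨fun g => θ (⟨(xk (idx g))⁻¹ * g, hmem g⟩ : Γ)⁻¹ (v (idx g)), by
        intro g γ
        have h1 : idx (g * γ) = idx g := hidx_mul g γ
        have h2 : (⟨(xk (idx (g * γ)))⁻¹ * (g * γ), hmem (g * γ)⟩ : Γ)
            = (⟨(xk (idx g))⁻¹ * g, hmem g⟩ : Γ) * γ := by
          apply Subtype.ext
          simp [h1, mul_assoc]
        dsimp only
        rw [h2, h1, mul_inv_rev, map_mul]
        rfl⟩
      left_inv := by
        intro f
        apply Subtype.ext
        funext g
        show θ (⟨(xk (idx g))⁻¹ * g, hmem g⟩ : Γ)⁻¹ ((f : G → V) (xk (idx g))) = (f : G → V) g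
        rw [← f.2 (xk (idx g)) (⟨(xk (idx g))⁻¹ * g, hmem g⟩ : Γ)]
        simp
      right_inv := by
        intro v
        funext k
        show θ (⟨(xk (idx (xk k)))⁻¹ * (xk k), hmem (xk k)⟩ : Γ)⁻¹ (v (idx (xk k))) = v k
        have h1 : idx (xk k) = k := hidx_xk k
        have h2 : (⟨(xk (idx (xk k)))⁻¹ * (xk k), hmem (xk k)⟩ : Γ) = 1 := by
          apply Subtype.ext
          simp [h1]
        rw [h2, h1]
        simp }
  rw [← LinearMap.trace_conj' ((IndRep Γ θ) x) e]
  -- choose bases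
  let b : Module.Basis (Fin (Module.finrank ℂ V)) ℂ V := Module.finBasis ℂ V
  let B : Module.Basis (Σ _ : Fin n, Fin (Module.finrank ℂ V)) ℂ (Fin n → V) :=
    Pi.basis (fun _ => b)
  rw [LinearMap.trace_eq_matrix_trace ℂ B, Matrix.trace]
  rw [← Finset.univ_sigma_univ, Finset.sum_sigma]
  refine Finset.sum_congr rfl fun k _ => ?_
  have hT : ∀ (p : Σ _ : Fin n, Fin (Module.finrank ℂ V)) (j : Fin n),
      (e.conj ((IndRep Γ θ) x)) (B p) j
        = θ (⟨(xk (idx (x⁻¹ * xk j)))⁻¹ * (x⁻¹ * xk j), hmem _⟩ : Γ)⁻¹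
            ((Pi.single p.1 (b p.2) : Fin n → V) (idx (x⁻¹ * xk j))) := by
    rintro ⟨k', i⟩ j
    rw [show B ⟨k', i⟩ = Pi.single k' (b i) from Pi.basis_apply _ _]
    rfl
  have hrepr : ∀ (f : Fin n → V) (p : Σ _ : Fin n, Fin (Module.finrank ℂ V)),
      B.repr f p = b.repr (f p.1) p.2 := fun f p => rfl
  by_cases h : (xk k)⁻¹ * x * xk k ∈ Γ
  · rw [dif_pos h]
    rw [LinearMap.trace_eq_matrix_trace ℂ b, Matrix.trace]
    refine Finset.sum_congr rfl fun i _ => ?_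
    have hmem' : (xk k)⁻¹ * (x⁻¹ * xk k) ∈ Γ := by
      have := Γ.inv_mem h
      simpa [mul_assoc] using this
    have hk : idx (x⁻¹ * xk k) = k := (huni (x⁻¹ * xk k) k hmem').symm
    have e1 : (⟨(xk (idx (x⁻¹ * xk k)))⁻¹ * (x⁻¹ * xk k), hmem _⟩ : Γ)⁻¹
        = (⟨(xk k)⁻¹ * x * xk k, h⟩ : Γ) := by
      apply Subtype.ext
      show ((xk (idx (x⁻¹ * xk k)))⁻¹ * (x⁻¹ * xk k))⁻¹ = (xk k)⁻¹ * x * xk k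
      rw [hk]
      group
    have e2 : (Pi.single k (b i) : Fin n → V) (idx (x⁻¹ * xk k)) = b i := by
      rw [hk, Pi.single_eq_same]
    simp only [Matrix.diag_apply, LinearMap.toMatrix_apply]
    rw [hrepr, hT ⟨k, i⟩ k]
    show b.repr (θ _ ((Pi.single k (b i) : Fin n → V) (idx (x⁻¹ * xk k)))) i = _
    rw [e1, e2]
  · rw [dif_neg h]
    have hk : idx (x⁻¹ * xk k) ≠ k := by
      intro hc
      apply h
      have := hmem (x⁻¹ * xk k)
      rw [hc] at this
      have := Γ.inv_mem this
      simpa [mul_assoc, mul_inv_rev] using this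
    refine Finset.sum_eq_zero fun i _ => ?_
    simp only [Matrix.diag_apply, LinearMap.toMatrix_apply]
    rw [hrepr, hT ⟨k, i⟩ k]
    show b.repr (θ _ ((Pi.single k (b i) : Fin n → V) (idx (x⁻¹ * xk k)))) i = 0
    rw [Pi.single_eq_of_ne hk]
    simp
end

section
/- In a locally compact Hausdorff topological group G, if Γ is a discrete subgroup and, for some element γ ∈ Γ, Γ is cocompact in G (G/Γ compact), then the image of the centralizer G_γ in G/Γ is closed and homeomorphic to G_γ/(G_γ ∩ Γ); consequently G_γ/(G_γ ∩ Γ) is compact, i.e., Γ_γ is cocompact in G_γ. -/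
open Set

section Aux

variable {G : Type*} [Group G] [TopologicalSpace G] [IsTopologicalGroup G]

/-- The quotient of a topological group by a closed subgroup is Hausdorff. -/
theorem aux_t2Space_quotient (Γ : Subgroup G) (hΓ : IsClosed (Γ : Set G)) :
    T2Space (G ⧸ Γ) := by
  constructor
  intro x y hxy
  obtain ⟨a, rfl⟩ := QuotientGroup.mk_surjective x
  obtain ⟨b, rfl⟩ := QuotientGroup.mk_surjective y
  have hab : a⁻¹ * b ∈ ((Γ : Set G)ᶜ) := fun h => hxy (QuotientGroup.eq.mpr h)
  have hcont : Continuous fun p : G × G => p.1⁻¹ * p.2 :=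
    (continuous_fst.inv).mul continuous_snd
  have hopen : IsOpen ((fun p : G × G => p.1⁻¹ * p.2) ⁻¹' (Γ : Set G)ᶜ) :=
    hΓ.isOpen_compl.preimage hcont
  obtain ⟨A, B, hA, hB, haA, hbB, hsub⟩ := isOpen_prod_iff.mp hopen a b hab
  refine ⟨QuotientGroup.mk '' A, QuotientGroup.mk '' B,
    QuotientGroup.isOpenMap_coe _ hA, QuotientGroup.isOpenMap_coe _ hB,
    ⟨a, haA, rfl⟩, ⟨b, hbB, rfl⟩, ?_⟩
  rw [Set.disjoint_left]
  rintro z ⟨a', ha', rfl⟩ ⟨b', hb', hz⟩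
  exact hsub (Set.mk_mem_prod ha' hb') (QuotientGroup.eq.mp hz.symm)

/-- Any subset of a discrete subgroup of a Hausdorff topological group is closed. -/
theorem aux_isClosed_of_subset_discrete [T2Space G] (Γ : Subgroup G) [DiscreteTopology Γ]
    {A : Set G} (hA : A ⊆ (Γ : Set G)) : IsClosed A := by
  have hΓ : IsClosed (Γ : Set G) := Subgroup.isClosed_of_discrete
  have hemb := hΓ.isClosedEmbedding_subtypeVal
  have : A = ((↑) : Γ → G) '' (((↑) : Γ → G) ⁻¹' A) := by
    rw [Set.image_preimage_eq_inter_range, Subtype.range_coe]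
    exact (Set.inter_eq_left.mpr hA).symm
  rw [this]
  exact hemb.isClosedMap _ (isClosed_discrete _)

end Aux

/-- In a (second countable) locally compact Hausdorff topological group `G` with a discrete
cocompact subgroup `Γ` and `γ ∈ Γ`, the image of the centralizer `G_γ` in `G/Γ` is closed and
homeomorphic to `G_γ/(G_γ ∩ Γ)`; consequently `G_γ/(G_γ ∩ Γ)` is compact, i.e. `Γ_γ` is
cocompact in `G_γ`. -/
theorem centralizer_image_closed_and_cocompact (G : Type*) [Group G] [TopologicalSpace G]
    [IsTopologicalGroup G] [LocallyCompactSpace G] [T2Space G] [SecondCountableTopology G]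
    (Γ : Subgroup G) [DiscreteTopology Γ] [CompactSpace (G ⧸ Γ)]
    (γ : G) (hγ : γ ∈ Γ) :
    IsClosed ((QuotientGroup.mk '' (Subgroup.centralizer ({γ} : Set G) : Set G)) :
        Set (G ⧸ Γ)) ∧
      Nonempty
        ((↥(Subgroup.centralizer ({γ} : Set G)) ⧸
            Γ.subgroupOf (Subgroup.centralizer ({γ} : Set G))) ≃ₜ
          ((QuotientGroup.mk '' (Subgroup.centralizer ({γ} : Set G) : Set G)) :
            Set (G ⧸ Γ))) ∧
      CompactSpace
        (↥(Subgroup.centralizer ({γ} : Set G)) ⧸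
          Γ.subgroupOf (Subgroup.centralizer ({γ} : Set G))) := by
  set H := Subgroup.centralizer ({γ} : Set G) with hHdef
  set X : Set (G ⧸ Γ) := QuotientGroup.mk '' (H : Set G) with hXdef
  -- Step 1 : `H Γ` is closed in `G`.
  have key : (QuotientGroup.mk ⁻¹' X : Set G) =
      (fun g : G => g⁻¹ * γ * g) ⁻¹' (Set.range fun δ : Γ => (δ : G)⁻¹ * γ * δ) := by
    rw [hXdef, QuotientGroup.preimage_image_mk_eq_mul]
    ext g
    constructor
    · rintro ⟨h, hh, δ, hδ, rfl⟩
      have hcomm : h * γ = γ * h :=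
        Subgroup.mem_centralizer_singleton_iff.mp (SetLike.mem_coe.mp hh)
      simp only [Set.mem_preimage]
      refine ⟨⟨δ, hδ⟩, ?_⟩
      have hconj : h⁻¹ * γ * h = γ := by
        rw [mul_assoc, ← hcomm]; group
      calc (δ : G)⁻¹ * γ * δ = δ⁻¹ * (h⁻¹ * γ * h) * δ := by rw [hconj]
        _ = (h * δ)⁻¹ * γ * (h * δ) := by group
    · rintro ⟨⟨δ, hδ⟩, hδeq⟩
      simp only [Set.mem_preimage] at hδeq
      refine ⟨g * δ⁻¹, ?_, δ, hδ, by group⟩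
      apply SetLike.mem_coe.mpr
      apply Subgroup.mem_centralizer_singleton_iff.mpr
      calc (g * δ⁻¹) * γ = g * (δ⁻¹ * γ * δ) * δ⁻¹ := by group
        _ = g * (g⁻¹ * γ * g) * δ⁻¹ := by rw [hδeq]
        _ = γ * (g * δ⁻¹) := by group
  have hrange_sub : (Set.range fun δ : Γ => (δ : G)⁻¹ * γ * δ) ⊆ (Γ : Set G) := by
    rintro _ ⟨δ, rfl⟩
    exact mul_mem (mul_mem (inv_mem δ.2) hγ) δ.2
  have hpreclosed : IsClosed (QuotientGroup.mk ⁻¹' X : Set G) := by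
    rw [key]
    exact (aux_isClosed_of_subset_discrete Γ hrange_sub).preimage
      (((continuous_id.inv.mul continuous_const)).mul continuous_id)
  have hXclosed : IsClosed X :=
    (QuotientGroup.isQuotientMap_mk Γ).isClosed_preimage.mp hpreclosed
  -- Step 2 : topological facts about `X`.
  have hT2 : T2Space (G ⧸ Γ) := aux_t2Space_quotient Γ Subgroup.isClosed_of_discrete
  have hXcompact : IsCompact X := hXclosed.isCompact
  haveI : CompactSpace X := isCompact_iff_compactSpace.mp hXcompact
  haveI : T2Space X := inferInstance
  haveI : LocallyCompactSpace X := inferInstance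
  haveI : BaireSpace X := BaireSpace.of_t2Space_locallyCompactSpace
  -- Step 3 : `H` is a sigma-compact group.
  have hHclosed : IsClosed (H : Set G) := by
    have : (H : Set G) = {h : G | h * γ = γ * h} := by
      ext h; exact Subgroup.mem_centralizer_singleton_iff
    rw [this]
    exact isClosed_eq (continuous_id.mul continuous_const) (continuous_const.mul continuous_id)
  haveI : LocallyCompactSpace H := hHclosed.locallyCompactSpace
  haveI : SecondCountableTopology H := TopologicalSpace.secondCountableTopology_induced H G ((↑) : H → G)
  haveI : TopologicalSpace.SeparableSpace H :=
    TopologicalSpace.SecondCountableTopology.to_separableSpace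
  haveI : SigmaCompactSpace H := inferInstance
  -- Step 4 : the transitive action of `H` on `X`.
  have hXmem : ∀ (h : H) (x : G ⧸ Γ), x ∈ X → (h : G) • x ∈ X := by
    rintro h _ ⟨g, hg, rfl⟩
    refine ⟨h * g, mul_mem h.2 hg, ?_⟩
    rw [MulAction.Quotient.smul_mk, smul_eq_mul]
  letI : SMul H X := ⟨fun h x => ⟨(h : G) • (x : G ⧸ Γ), hXmem h x x.2⟩⟩
  have smul_def : ∀ (h : H) (x : X), ((h • x : X) : G ⧸ Γ) = (h : G) • (x : G ⧸ Γ) :=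
    fun _ _ => rfl
  letI : MulAction H X :=
    { one_smul := fun x => Subtype.ext (by rw [smul_def]; simp)
      mul_smul := fun a b x => Subtype.ext (by simp only [smul_def]; rw [Subgroup.coe_mul,
        mul_smul]) }
  haveI : ContinuousSMul H X := by
    refine ⟨continuous_induced_rng.mpr ?_⟩
    show Continuous fun p : H × X => ((p.1 : G) • (p.2 : G ⧸ Γ))
    exact (continuous_subtype_val.comp continuous_fst).smul
      (continuous_subtype_val.comp continuous_snd)
  haveI : MulAction.IsPretransitive H X := by
    constructor
    rintro ⟨_, g₁, hg₁, rfl⟩ ⟨_, g₂, hg₂, rfl⟩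
    refine ⟨⟨g₂ * g₁⁻¹, mul_mem hg₂ (inv_mem hg₁)⟩, Subtype.ext ?_⟩
    rw [smul_def]
    show (g₂ * g₁⁻¹) • (QuotientGroup.mk g₁) = QuotientGroup.mk g₂
    rw [MulAction.Quotient.smul_mk]
    congr 1
    rw [smul_eq_mul]
    group
  -- Step 5 : the orbit map and the induced homeomorphism.
  set x₀ : X := ⟨QuotientGroup.mk 1, ⟨1, H.one_mem, rfl⟩⟩ with hx₀
  have horbit_open : IsOpenMap (fun h : H => h • x₀) := isOpenMap_smul_of_sigmaCompact x₀
  have horbit_cont : Continuous (fun h : H => h • x₀) := continuous_id.smul continuous_const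
  have horbit_eq : ∀ h : H, ((h • x₀ : X) : G ⧸ Γ) = QuotientGroup.mk (h : G) := by
    intro h
    rw [smul_def]
    show (h : G) • (QuotientGroup.mk 1) = _
    rw [MulAction.Quotient.smul_mk]
    congr 1
    rw [smul_eq_mul, mul_one]
  -- the induced map on the quotient
  set K : Subgroup H := Γ.subgroupOf H with hK
  have hwd : ∀ a b : H, QuotientGroup.leftRel K a b → (a • x₀ : X) = b • x₀ := by
    intro a b hab
    rw [QuotientGroup.leftRel_apply] at hab
    apply Subtype.ext
    rw [horbit_eq, horbit_eq]
    exact QuotientGroup.eq.mpr hab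
  set e : (H ⧸ K) → X := fun q => Quotient.liftOn' q (fun h : H => h • x₀) hwd with he
  have he_mk : ∀ h : H, e (QuotientGroup.mk h) = h • x₀ := fun h => rfl
  have he_cont : Continuous e :=
    (QuotientGroup.isQuotientMap_mk K).continuous_iff.mpr horbit_cont
  have he_open : IsOpenMap e := by
    intro U hU
    have : e '' U = (fun h : H => h • x₀) '' (QuotientGroup.mk ⁻¹' U) := by
      ext x
      constructor
      · rintro ⟨q, hq, rfl⟩
        obtain ⟨h, rfl⟩ := QuotientGroup.mk_surjective q
        exact ⟨h, hq, rfl⟩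
      · rintro ⟨h, hh, rfl⟩
        exact ⟨QuotientGroup.mk h, hh, rfl⟩
    rw [this]
    exact horbit_open _ (hU.preimage QuotientGroup.continuous_mk)
  have he_bij : Function.Bijective e := by
    constructor
    · intro q₁ q₂ hq
      obtain ⟨h₁, rfl⟩ := QuotientGroup.mk_surjective q₁
      obtain ⟨h₂, rfl⟩ := QuotientGroup.mk_surjective q₂
      rw [he_mk, he_mk] at hq
      have := congrArg (Subtype.val) hq
      rw [horbit_eq, horbit_eq] at this
      have hmem : (h₁ : G)⁻¹ * h₂ ∈ Γ := QuotientGroup.eq.mp this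
      refine QuotientGroup.eq.mpr ?_
      rw [hK, Subgroup.mem_subgroupOf]
      simpa using hmem
    · rintro ⟨_, g, hg, rfl⟩
      refine ⟨QuotientGroup.mk ⟨g, hg⟩, Subtype.ext ?_⟩
      rw [he_mk, horbit_eq]
  have homeo : (H ⧸ K) ≃ₜ X :=
    Equiv.toHomeomorphOfContinuousOpen (Equiv.ofBijective e he_bij) he_cont he_open
  refine ⟨hXclosed, ⟨homeo⟩, ?_⟩
  exact homeo.symm.compactSpace
end
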